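/- arXiv:2410.13849 — 5 statements merged into one kernel-verified Lean document; each statement's English description precedes it below -/
import Mathlib

section
/- Unified high-probability bound for NSGD: let δ ∈ (0,1), let (g_t)_{t≥1} be any sequence of random vectors in ℝ^d, and run NSGD x_{t+1} = x_t − η_t·g_t/‖g_t‖ (with g_t/‖g_t‖ = 0 if g_t = 0) with deterministic step-sizes η_t > 0. Let F_{t−1} = σ(g_1, …, g_{t−1}), assume σ_t := E[‖g_t − ∇F(x_t)‖ | F_{t−1}] < ∞ almost surely for all t ≤ T, and set η_max = max_{1≤t≤T} η_t, C_T = max_{1≤t≤T} η_t·∑_{τ=1}^{t−1} η_τ, and w_t = η_t / ∑_{τ=1}^T η_τ. Then with probability at least 1 − δ: ∑_{t=1}^T w_t·‖∇F(x_t)‖ ≤ ( 2Δ₁ + L·∑_{t=1}^T η_t² + 4·∑_{t=1}^T η_t·σ_t ) / ∑_{τ=1}^T η_τ + 12·( η_max·‖∇F(x₁)‖ + C_T·L )·log(1/δ) / ∑_{τ=1}^T η_τ. -/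
open MeasureTheory ProbabilityTheory Real
set_option maxHeartbeats 1600000

section Aux
open InnerProductSpace

lemma descent_lemma {E : Type*} [NormedAddCommGroup E] [InnerProductSpace ℝ E] [CompleteSpace E]
    (F : E → ℝ) (gradF : E → E) (L : ℝ) (hL : 0 ≤ L)
    (hgrad : ∀ x, HasGradientAt F (gradF x) x)
    (hsmooth : ∀ x y, ‖gradF x - gradF y‖ ≤ L * ‖x - y‖) (x y : E) :
    F y ≤ F x + inner ℝ (gradF x) (y - x) + L * ‖y - x‖ ^ 2 := by
  set φ : E → ℝ := fun u => F u - inner ℝ (gradF x) u with hφ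
  have hseg : ∀ u ∈ segment ℝ x y, ‖u - x‖ ≤ ‖y - x‖ := by
    intro u hu
    rw [segment_eq_image'] at hu
    obtain ⟨t, ⟨ht0, ht1⟩, rfl⟩ := hu
    simp only [add_sub_cancel_left]
    rw [norm_smul, Real.norm_eq_abs, abs_of_nonneg ht0]
    nlinarith [norm_nonneg (y - x)]
  have hder : ∀ u ∈ segment ℝ x y,
      HasFDerivWithinAt φ (toDual ℝ E (gradF u) - toDual ℝ E (gradF x)) (segment ℝ x y) u :=
    fun u _ =>
    (((hgrad u).hasFDerivAt.sub ((toDual ℝ E (gradF x)).hasFDerivAt)).hasFDerivWithinAt)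
  have hbd : ∀ u ∈ segment ℝ x y, ‖toDual ℝ E (gradF u) - toDual ℝ E (gradF x)‖ ≤ L * ‖y - x‖ := by
    intro u hu
    rw [← map_sub, (toDual ℝ E).norm_map]
    calc ‖gradF u - gradF x‖ ≤ L * ‖u - x‖ := hsmooth u x
      _ ≤ L * ‖y - x‖ := by
        have := hseg u hu; nlinarith
  have hmvt := (convex_segment x y).norm_image_sub_le_of_norm_hasFDerivWithin_le
    hder hbd (left_mem_segment ℝ x y) (right_mem_segment ℝ x y)
  have h1 : φ y - φ x ≤ L * ‖y - x‖ * ‖y - x‖ :=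
    le_trans (le_abs_self _) ((Real.norm_eq_abs _) ▸ hmvt)
  have h2 : (inner ℝ (gradF x) y : ℝ) - inner ℝ (gradF x) x = inner ℝ (gradF x) (y - x) := by
    rw [inner_sub_right]
  simp only [hφ] at h1
  nlinarith [h1, h2]


lemma inner_normalized_bound {E : Type*} [NormedAddCommGroup E] [InnerProductSpace ℝ E]
    (v w : E) :
    ‖v‖ - min (2 * ‖w - v‖) (2 * ‖v‖) ≤ inner ℝ v (‖w‖⁻¹ • w) := by
  rcases eq_or_ne w 0 with rfl | hw
  · simp only [smul_zero, inner_zero_right]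
    have : ‖v‖ ≤ min (2 * ‖(0:E) - v‖) (2 * ‖v‖) := by
      simp only [zero_sub, norm_neg]
      exact le_min (by nlinarith [norm_nonneg v]) (by nlinarith [norm_nonneg v])
    linarith
  · have hnw : 0 < ‖w‖ := norm_pos_iff.mpr hw
    have hu : ‖(‖w‖⁻¹ • w)‖ = 1 := by
      rw [norm_smul, Real.norm_eq_abs, abs_of_nonneg (by positivity)]
      field_simp
    rw [min_def]
    split_ifs with hmin
    · -- ‖v‖ - 2‖w - v‖ ≤ ⟪v, u⟫
      have h1 : (inner ℝ w (‖w‖⁻¹ • w) : ℝ) = ‖w‖ := by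
        rw [real_inner_smul_right, real_inner_self_eq_norm_sq]
        field_simp
      have h2 : |(inner ℝ (v - w) (‖w‖⁻¹ • w) : ℝ)| ≤ ‖v - w‖ := by
        calc |(inner ℝ (v - w) (‖w‖⁻¹ • w) : ℝ)| ≤ ‖v - w‖ * ‖(‖w‖⁻¹ • w)‖ :=
          abs_real_inner_le_norm _ _
        _ = ‖v - w‖ := by rw [hu, mul_one]
      have h3 : (inner ℝ v (‖w‖⁻¹ • w) : ℝ) = inner ℝ w (‖w‖⁻¹ • w) + inner ℝ (v - w) (‖w‖⁻¹ • w) := by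
        rw [← inner_add_left]; congr 1; abel
      have h4 : ‖v‖ - ‖v - w‖ ≤ ‖w‖ := by
        have := norm_sub_norm_le v w; linarith [this]
      have h5 : ‖w - v‖ = ‖v - w‖ := norm_sub_rev w v
      rw [h3, h1]
      have := abs_le.mp h2
      linarith [this.1, this.2]
    · -- ‖v‖ - 2‖v‖ ≤ ⟪v, u⟫
      have := abs_real_inner_le_norm v (‖w‖⁻¹ • w)
      rw [hu, mul_one] at this
      have := abs_le.mp this
      linarith [this.1]


lemma bounded_integrable {Ω : Type*} [m0 : MeasurableSpace Ω] {μ : Measure Ω}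
    [IsFiniteMeasure μ] {f : Ω → ℝ} (hf : AEStronglyMeasurable f μ) (C : ℝ)
    (h : ∀ᵐ ω ∂μ, |f ω| ≤ C) : Integrable f μ :=
  Integrable.mono' (integrable_const C) hf (by filter_upwards [h] with ω hω; rwa [Real.norm_eq_abs])

lemma mgf_supermartingale_bound {Ω : Type*} [m0 : MeasurableSpace Ω] (μ : Measure Ω)
    [IsProbabilityMeasure μ]
    (𝓕 : ℕ → MeasurableSpace Ω) (hle : ∀ t, 𝓕 t ≤ m0) (hmono : Monotone 𝓕)
    (X σ' : ℕ → Ω → ℝ) (c : ℝ) (hc : 0 < c) (N : ℕ)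
    (hXmeas : ∀ t, 1 ≤ t → t ≤ N → Measurable[𝓕 t] (X t))
    (hX0 : ∀ t ω, 0 ≤ X t ω)
    (hXc : ∀ t ω, 1 ≤ t → t ≤ N → X t ω ≤ c / 2)
    (hσmeas : ∀ t, 1 ≤ t → t ≤ N → StronglyMeasurable[𝓕 (t - 1)] (σ' t))
    (hσ0 : ∀ t, 0 ≤ᵐ[μ] σ' t)
    (hcond : ∀ t, 1 ≤ t → t ≤ N → μ[X t|𝓕 (t - 1)] ≤ᵐ[μ] σ' t) :
    ∫ ω, Real.exp (∑ t ∈ Finset.Icc 1 N, (X t ω - 2 * σ' t ω) / c) ∂μ ≤ 1 := by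
  induction N with
  | zero => simp [Finset.Icc_eq_empty (by omega : ¬ (1:ℕ) ≤ 0)]
  | succ n IH =>
    have hσae : ∀ᵐ ω ∂μ, ∀ t, 0 ≤ σ' t ω := ae_all_iff.mpr hσ0
    have hm : 𝓕 n ≤ m0 := hle n
    set S : Ω → ℝ := fun ω => ∑ t ∈ Finset.Icc 1 n, (X t ω - 2 * σ' t ω) / c with hS
    have hSmeas : Measurable[𝓕 n] S := by
      apply Finset.measurable_sum
      intro t ht
      rw [Finset.mem_Icc] at ht
      have hXm : Measurable[𝓕 n] (X t) :=
        (hXmeas t ht.1 (ht.2.trans (Nat.le_succ n))).mono (hmono ht.2) le_rfl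
      have hσm : Measurable[𝓕 n] (σ' t) :=
        ((hσmeas t ht.1 (ht.2.trans (Nat.le_succ n))).measurable).mono
          (hmono (by omega : t - 1 ≤ n)) le_rfl
      exact (hXm.sub (hσm.const_mul 2)).div_const c
    have hSbd : ∀ᵐ ω ∂μ, S ω ≤ n * (1 / 2) := by
      filter_upwards [hσae] with ω hω
      calc S ω ≤ ∑ t ∈ Finset.Icc 1 n, (1/2 : ℝ) := by
            apply Finset.sum_le_sum
            intro t ht
            rw [Finset.mem_Icc] at ht
            have h1 : X t ω ≤ c / 2 := hXc t ω ht.1 (ht.2.trans (Nat.le_succ n))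
            have h2 : 0 ≤ σ' t ω := hω t
            rw [div_le_iff₀ hc]; nlinarith
        _ = n * (1/2) := by
            rw [Finset.sum_const, Nat.card_Icc, Nat.add_sub_cancel, nsmul_eq_mul]
    have hσm1 : Measurable[𝓕 n] (σ' (n + 1)) := by
      have := (hσmeas (n+1) (by omega) le_rfl).measurable
      simpa using this
    set A : Ω → ℝ := fun ω => Real.exp (S ω - 2 * σ' (n + 1) ω / c) with hA
    set B : Ω → ℝ := fun ω => Real.exp (X (n + 1) ω / c) with hB
    have hAmeas : Measurable[𝓕 n] A :=
      (hSmeas.sub ((hσm1.const_mul 2).div_const c)).exp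
    have hAsm : StronglyMeasurable[𝓕 n] A := hAmeas.stronglyMeasurable
    have hA0 : ∀ ω, 0 ≤ A ω := fun ω => (Real.exp_pos _).le
    have hAbd : ∀ᵐ ω ∂μ, A ω ≤ Real.exp (n * (1/2)) := by
      filter_upwards [hσae, hSbd] with ω hω hSω
      apply Real.exp_le_exp.mpr
      have h1 := hω (n+1)
      have h2 : 0 ≤ 2 * σ' (n+1) ω / c := by positivity
      linarith
    have hAint : Integrable A μ := by
      apply bounded_integrable ((hAmeas.mono hm le_rfl).aestronglyMeasurable) (Real.exp (n * (1/2)))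
      filter_upwards [hAbd] with ω h
      rw [abs_of_nonneg (hA0 ω)]; exact h
    have hBmeas : Measurable B :=
      (((hXmeas (n+1) (by omega) le_rfl).mono (hle (n+1)) le_rfl).div_const c).exp
    have hB1 : ∀ ω, 1 ≤ B ω := fun ω => by
      rw [hB]
      simpa using Real.exp_le_exp.mpr (div_nonneg (hX0 (n+1) ω) hc.le)
    have hBbd : ∀ ω, B ω ≤ Real.exp (1/2) := fun ω => by
      apply Real.exp_le_exp.mpr
      rw [div_le_iff₀ hc]
      have := hXc (n+1) ω (by omega) le_rfl
      linarith
    have hBint : Integrable B μ := by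
      apply bounded_integrable hBmeas.aestronglyMeasurable (Real.exp (1/2))
      refine Filter.Eventually.of_forall fun ω => ?_
      rw [abs_of_nonneg (le_trans zero_le_one (hB1 ω))]; exact hBbd ω
    have hABint : Integrable (A * B) μ := by
      apply bounded_integrable
        (((hAmeas.mono hm le_rfl).mul hBmeas).aestronglyMeasurable)
        (Real.exp (n * (1/2)) * Real.exp (1/2))
      filter_upwards [hAbd] with ω h
      show |A ω * B ω| ≤ _
      rw [abs_of_nonneg (mul_nonneg (hA0 ω) (le_trans zero_le_one (hB1 ω)))]
      exact mul_le_mul h (hBbd ω) (le_trans zero_le_one (hB1 ω)) (Real.exp_pos _).le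
    have hμX : μ[X (n+1)|𝓕 n] ≤ᵐ[μ] σ' (n + 1) := by
      have := hcond (n+1) (by omega) le_rfl
      simpa using this
    have hXint : Integrable (X (n+1)) μ := by
      apply bounded_integrable
        (((hXmeas (n+1) (by omega) le_rfl).mono (hle (n+1)) le_rfl).aestronglyMeasurable) (c/2)
      refine Filter.Eventually.of_forall fun ω => ?_
      rw [abs_of_nonneg (hX0 _ ω)]; exact hXc (n+1) ω (by omega) le_rfl
    have hBptw : ∀ ω, B ω ≤ 1 + (2 / c) * X (n+1) ω := by
      intro ω
      have hx0 : 0 ≤ X (n+1) ω / c := div_nonneg (hX0 (n+1) ω) hc.le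
      have hx2 : X (n+1) ω / c ≤ 1/2 := by
        rw [div_le_iff₀ hc]; have := hXc (n+1) ω (by omega) le_rfl; linarith
      have h1 : B ω ≤ 1 / (1 - X (n+1) ω / c) :=
        Real.exp_bound_div_one_sub_of_interval hx0 (by linarith)
      have h2 : 1 / (1 - X (n+1) ω / c) ≤ 1 + 2 * (X (n+1) ω / c) := by
        rw [div_le_iff₀ (by linarith)]
        nlinarith
      calc B ω ≤ 1 + 2 * (X (n+1) ω / c) := le_trans h1 h2
        _ = 1 + (2/c) * X (n+1) ω := by ring
    have hRint : Integrable (fun ω => 1 + (2 / c) * X (n+1) ω) μ :=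
      (integrable_const 1).add (hXint.const_mul _)
    have hBcond : μ[B|𝓕 n] ≤ᵐ[μ] fun ω => Real.exp (2 * σ' (n + 1) ω / c) := by
      have s1 : μ[B|𝓕 n] ≤ᵐ[μ] μ[fun ω => 1 + (2 / c) * X (n+1) ω|𝓕 n] :=
        condExp_mono hBint hRint (Filter.Eventually.of_forall hBptw)
      have e1 : (fun ω => 1 + (2 / c) * X (n+1) ω)
          = (fun _ => (1:ℝ)) + (2/c) • (X (n+1)) := by
        funext ω; simp [smul_eq_mul]
      have s2 : μ[fun ω => 1 + (2 / c) * X (n+1) ω|𝓕 n]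
          =ᵐ[μ] fun ω => 1 + (2/c) * (μ[X (n+1)|𝓕 n]) ω := by
        rw [e1]
        have c1 := condExp_add (μ := μ) (m := 𝓕 n) (integrable_const (1:ℝ)) (hXint.smul (2/c))
        have c2 := condExp_smul (μ := μ) (m := 𝓕 n) (2/c) (X (n+1))
        have c3 := condExp_const (μ := μ) hm (1:ℝ)
        filter_upwards [c1, c2] with ω h1 h2
        rw [h1]
        simp only [Pi.add_apply, Pi.smul_apply, smul_eq_mul]
        rw [h2]
        simp only [Pi.smul_apply, smul_eq_mul]
        rw [congrFun c3 ω]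
      filter_upwards [s1, s2, hμX] with ω h1 h2 h3
      calc (μ[B|𝓕 n]) ω ≤ (μ[fun ω => 1 + (2 / c) * X (n+1) ω|𝓕 n]) ω := h1
        _ = 1 + (2/c) * (μ[X (n+1)|𝓕 n]) ω := h2
        _ ≤ 1 + (2/c) * σ' (n+1) ω := by
            have h4 : (0:ℝ) ≤ 2/c := by positivity
            nlinarith
        _ ≤ Real.exp (2 * σ' (n + 1) ω / c) := by
            have h5 : (2/c) * σ' (n+1) ω = 2 * σ' (n + 1) ω / c := by ring
            linarith [Real.add_one_le_exp (2 * σ' (n + 1) ω / c)]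
    have hBcond0 : 0 ≤ᵐ[μ] μ[B|𝓕 n] :=
      condExp_nonneg (Filter.Eventually.of_forall fun ω => (le_trans zero_le_one (hB1 ω)))
    have hBcondbd : μ[B|𝓕 n] ≤ᵐ[μ] fun _ => Real.exp (1/2) := by
      have h1 := condExp_mono (μ := μ) (m := 𝓕 n) hBint (integrable_const (Real.exp (1/2)))
        (Filter.Eventually.of_forall hBbd)
      have h2 := condExp_const (μ := μ) hm (Real.exp (1/2))
      filter_upwards [h1] with ω hω
      calc (μ[B|𝓕 n]) ω ≤ (μ[fun _ => Real.exp (1/2)|𝓕 n]) ω := hω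
        _ = Real.exp (1/2) := congrFun h2 ω
    have hsplit : ∀ ω, Real.exp (∑ t ∈ Finset.Icc 1 (n+1), (X t ω - 2 * σ' t ω) / c)
        = A ω * B ω := by
      intro ω
      simp only [hA, hB]
      rw [Finset.sum_Icc_succ_top (by omega : 1 ≤ n + 1), ← Real.exp_add]
      congr 1
      ring
    calc ∫ ω, Real.exp (∑ t ∈ Finset.Icc 1 (n+1), (X t ω - 2 * σ' t ω) / c) ∂μ
        = ∫ ω, (A * B) ω ∂μ := integral_congr_ae (Filter.Eventually.of_forall hsplit)
      _ = ∫ ω, (μ[A * B|𝓕 n]) ω ∂μ := (integral_condExp hm).symm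
      _ = ∫ ω, A ω * (μ[B|𝓕 n]) ω ∂μ := by
          apply integral_congr_ae
          filter_upwards [condExp_mul_of_stronglyMeasurable_left hAsm hABint hBint] with ω h
          exact h
      _ ≤ ∫ ω, A ω * Real.exp (2 * σ' (n + 1) ω / c) ∂μ := by
          apply integral_mono_ae
          · apply bounded_integrable
              (((hAmeas.mono hm le_rfl).aestronglyMeasurable).mul
                (stronglyMeasurable_condExp.mono hm).aestronglyMeasurable)
              (Real.exp (n * (1/2)) * Real.exp (1/2))
            filter_upwards [hAbd, hBcond0, hBcondbd] with ω h1 h2 h3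
            simp only [Pi.mul_apply]
            rw [abs_of_nonneg (mul_nonneg (hA0 ω) h2)]
            exact mul_le_mul h1 h3 h2 (Real.exp_pos _).le
          · apply bounded_integrable
              (((hAmeas.mono hm le_rfl).mul
                (((hσm1.mono hm le_rfl).const_mul 2).div_const c).exp).aestronglyMeasurable)
              (Real.exp (n * (1/2)))
            filter_upwards [hσae, hSbd] with ω h1 h2
            have h3 : A ω * Real.exp (2 * σ' (n + 1) ω / c) = Real.exp (S ω) := by
              simp only [hA]
              rw [← Real.exp_add]; congr 1; ring
            show |A ω * Real.exp (2 * σ' (n + 1) ω / c)| ≤ _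
            rw [h3, abs_of_nonneg (Real.exp_pos _).le]
            exact Real.exp_le_exp.mpr h2
          · filter_upwards [hBcond] with ω h
            exact mul_le_mul_of_nonneg_left h (hA0 ω)
      _ = ∫ ω, Real.exp (S ω) ∂μ := by
          apply integral_congr_ae
          refine Filter.Eventually.of_forall fun ω => ?_
          simp only [hA]
          rw [← Real.exp_add]; congr 1; ring
      _ ≤ 1 := IH (fun t h1 h2 => hXmeas t h1 (h2.trans (Nat.le_succ n)))
          (fun t ω h1 h2 => hXc t ω h1 (h2.trans (Nat.le_succ n)))
          (fun t h1 h2 => hσmeas t h1 (h2.trans (Nat.le_succ n)))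
          (fun t h1 h2 => hcond t h1 (h2.trans (Nat.le_succ n)))

end Aux


/-- Theorem 3: unified high-probability bound for NSGD with an arbitrary
gradient estimator sequence `(g_t)`: with probability at least `1 − δ`, the weighted average
gradient norm is bounded by the in-expectation quantity plus a `log(1/δ)` deviation term. -/
theorem nsgd_unified_high_probability
    {d : ℕ} {Ω : Type*} [MeasurableSpace Ω] (μ : Measure Ω) [IsProbabilityMeasure μ]
    (F : EuclideanSpace ℝ (Fin d) → ℝ)
    (gradF : EuclideanSpace ℝ (Fin d) → EuclideanSpace ℝ (Fin d))
    (L Fstar Δ₁ δ : ℝ) (hL : 0 ≤ L) (hδ0 : 0 < δ) (hδ1 : δ < 1)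
    -- F is differentiable with gradient `gradF` and is L-smooth
    (hgrad : ∀ x, HasGradientAt F (gradF x) x)
    (hsmooth : ∀ x y, ‖gradF x - gradF y‖ ≤ L * ‖x - y‖)
    -- F is bounded below by Fstar
    (hlb : ∀ x, Fstar ≤ F x)
    -- horizon and deterministic positive step-sizes
    (T : ℕ) (hT : 1 ≤ T)
    (η : ℕ → ℝ) (hη : ∀ t, 0 < η t)
    -- the gradient estimators and the NSGD iterates
    (g : ℕ → Ω → EuclideanSpace ℝ (Fin d))
    (hgmeas : ∀ t, Measurable (g t))
    (x : ℕ → Ω → EuclideanSpace ℝ (Fin d))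
    (x₁ : EuclideanSpace ℝ (Fin d)) (hx1 : ∀ ω, x 1 ω = x₁)
    (hΔ : F x₁ - Fstar ≤ Δ₁)
    (hrec : ∀ t ω, 1 ≤ t → x (t + 1) ω = x t ω - η t • (‖g t ω‖⁻¹ • g t ω))
    -- the natural filtration of the estimators: 𝓕 t = σ(g_1, …, g_t)
    (𝓕 : ℕ → MeasurableSpace Ω)
    (h𝓕 : ∀ t, 𝓕 t = ⨆ s ∈ Finset.Icc 1 t, MeasurableSpace.comap (g s) inferInstance)
    -- the conditional expected deviations σ_t = E[‖g_t − ∇F(x_t)‖ | 𝓕_{t−1}] are finite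
    (hint : ∀ t ∈ Finset.Icc 1 T, Integrable (fun ω => ‖g t ω - gradF (x t ω)‖) μ)
    (σt : ℕ → Ω → ℝ)
    (hσt : ∀ t, σt t = μ[fun ω => ‖g t ω - gradF (x t ω)‖ | 𝓕 (t - 1)]) :
    ENNReal.ofReal (1 - δ) ≤
      μ {ω | ∑ t ∈ Finset.Icc 1 T,
              (η t / ∑ τ ∈ Finset.Icc 1 T, η τ) * ‖gradF (x t ω)‖ ≤
            (2 * Δ₁ + L * ∑ t ∈ Finset.Icc 1 T, (η t) ^ 2
                + 4 * ∑ t ∈ Finset.Icc 1 T, η t * σt t ω) /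
              (∑ τ ∈ Finset.Icc 1 T, η τ)
            + 12 * (((Finset.Icc 1 T).sup' (Finset.nonempty_Icc.mpr hT) η) * ‖gradF x₁‖
                  + ((Finset.Icc 1 T).sup' (Finset.nonempty_Icc.mpr hT)
                      (fun t => η t * ∑ τ ∈ Finset.Icc 1 (t - 1), η τ)) * L)
                * Real.log (1 / δ) / (∑ τ ∈ Finset.Icc 1 T, η τ)} := by

  classical
  -- abbreviations
  have hT1 : (1:ℕ) ∈ Finset.Icc 1 T := Finset.mem_Icc.mpr ⟨le_rfl, hT⟩
  set S : ℝ := ∑ τ ∈ Finset.Icc 1 T, η τ with hSdef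
  have hSpos : 0 < S := Finset.sum_pos (fun i _ => hη i) ⟨1, hT1⟩
  set G1 : ℝ := ‖gradF x₁‖ with hG1def
  set ηmax : ℝ := (Finset.Icc 1 T).sup' (Finset.nonempty_Icc.mpr hT) η with hηmaxdef
  set C : ℝ := (Finset.Icc 1 T).sup' (Finset.nonempty_Icc.mpr hT)
      (fun t => η t * ∑ τ ∈ Finset.Icc 1 (t - 1), η τ) with hCdef
  set K : ℝ := ηmax * G1 + C * L with hKdef
  set c : ℝ := 4 * K with hcdef
  set D : ℕ → Ω → ℝ := fun t ω => ‖g t ω - gradF (x t ω)‖ with hDdef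
  set X : ℕ → Ω → ℝ :=
    fun t ω => η t * min (2 * D t ω) (2 * ‖gradF (x t ω)‖) with hXdef
  set σ' : ℕ → Ω → ℝ := fun t ω => (2 * η t) * σt t ω with hσ'def
  -- filtration facts
  have hle : ∀ t, 𝓕 t ≤ ‹MeasurableSpace Ω› := by
    intro t
    rw [h𝓕 t]
    exact iSup₂_le fun s _ => measurable_iff_comap_le.mp (hgmeas s)
  have hmono : Monotone 𝓕 := by
    intro a b hab
    rw [h𝓕 a, h𝓕 b]
    exact biSup_mono fun s hs => Finset.mem_Icc.mpr
      ⟨(Finset.mem_Icc.mp hs).1, le_trans (Finset.mem_Icc.mp hs).2 hab⟩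
  have hgF : ∀ t, 1 ≤ t → Measurable[𝓕 t] (g t) := by
    intro t ht
    rw [measurable_iff_comap_le, h𝓕 t]
    exact le_biSup (fun s => MeasurableSpace.comap (g s) inferInstance)
      (Finset.mem_Icc.mpr ⟨ht, le_rfl⟩)
  -- continuity / measurability of gradF
  have hgradLip : LipschitzWith (Real.toNNReal L) gradF := by
    apply LipschitzWith.of_dist_le_mul
    intro a b
    rw [dist_eq_norm, dist_eq_norm, Real.coe_toNNReal L hL]
    exact hsmooth a b
  have hgradFmeas : Measurable gradF := hgradLip.continuous.measurable
  -- measurability of the iterates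
  have hxmeas : ∀ t, 1 ≤ t → Measurable[𝓕 (t - 1)] (x t) := by
    intro t ht
    induction t, ht using Nat.le_induction with
    | base =>
      have : x 1 = fun _ => x₁ := funext hx1
      rw [this]; exact measurable_const
    | succ n hn ih =>
      show Measurable[𝓕 n] (x (n + 1))
      have hxe : x (n + 1) = fun ω => x n ω - η n • (‖g n ω‖⁻¹ • g n ω) :=
        funext fun ω => hrec n ω hn
      rw [hxe]
      have h1 : Measurable[𝓕 n] (x n) := (ih).mono (hmono (Nat.sub_le n 1)) le_rfl
      have h2 : Measurable[𝓕 n] (g n) := hgF n hn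
      have hφ : Measurable (fun p : (EuclideanSpace ℝ (Fin d)) × (EuclideanSpace ℝ (Fin d)) =>
          p.1 - η n • (‖p.2‖⁻¹ • p.2)) :=
        measurable_fst.sub
          ((((measurable_norm.comp measurable_snd).inv).smul measurable_snd).const_smul (η n))
      exact hφ.comp (h1.prodMk h2)
  have hXmeasF : ∀ t, 1 ≤ t → Measurable[𝓕 t] (X t) := by
    intro t ht
    have hxt : Measurable[𝓕 t] (x t) := (hxmeas t ht).mono (hmono (Nat.sub_le t 1)) le_rfl
    have hgt : Measurable[𝓕 t] (g t) := hgF t ht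
    have hψ : Measurable (fun p : (EuclideanSpace ℝ (Fin d)) × (EuclideanSpace ℝ (Fin d)) =>
        η t * min (2 * ‖p.1 - gradF p.2‖) (2 * ‖gradF p.2‖)) :=
      ((((measurable_fst.sub (hgradFmeas.comp measurable_snd)).norm.const_mul 2).min
        ((hgradFmeas.comp measurable_snd).norm.const_mul 2)).const_mul (η t))
    have := hψ.comp (hgt.prodMk hxt)
    simp only [hXdef, hDdef]
    exact this
  have hXmeas0 : ∀ t, 1 ≤ t → Measurable (X t) :=
    fun t ht => (hXmeasF t ht).mono (hle t) le_rfl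
  have hσtmeas : ∀ t, Measurable (σt t) := by
    intro t
    rw [hσt t]
    exact (stronglyMeasurable_condExp.mono (hle (t - 1))).measurable
  have hσSM : ∀ t, 1 ≤ t → t ≤ T → StronglyMeasurable[𝓕 (t - 1)] (σ' t) := by
    intro t _ _
    have : StronglyMeasurable[𝓕 (t - 1)] (σt t) := by
      rw [hσt t]; exact stronglyMeasurable_condExp
    exact this.const_mul (2 * η t)
  -- nonnegativity facts
  have hX0 : ∀ t ω, 0 ≤ X t ω := by
    intro t ω
    simp only [hXdef, hDdef]
    apply mul_nonneg (hη t).le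
    apply le_min <;> positivity
  have hσt0 : ∀ t, 0 ≤ᵐ[μ] σt t := by
    intro t
    rw [hσt t]
    exact condExp_nonneg (Filter.Eventually.of_forall fun ω => norm_nonneg _)
  have hσ'0 : ∀ t, 0 ≤ᵐ[μ] σ' t := by
    intro t
    filter_upwards [hσt0 t] with ω hω
    exact mul_nonneg (by linarith [(hη t).le]) hω
  -- conditional expectation bound
  have hcond : ∀ t, 1 ≤ t → t ≤ T → μ[X t|𝓕 (t - 1)] ≤ᵐ[μ] σ' t := by
    intro t ht htT
    have hDint : Integrable (fun ω => D t ω) μ := by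
      simp only [hDdef]
      exact hint t (Finset.mem_Icc.mpr ⟨ht, htT⟩)
    have hXleD : ∀ ω, X t ω ≤ (2 * η t) * D t ω := by
      intro ω
      simp only [hXdef]
      have h1 : min (2 * D t ω) (2 * ‖gradF (x t ω)‖) ≤ 2 * D t ω := min_le_left _ _
      have h0 := (hη t).le
      calc η t * min (2 * D t ω) (2 * ‖gradF (x t ω)‖) ≤ η t * (2 * D t ω) :=
          mul_le_mul_of_nonneg_left h1 h0
        _ = (2 * η t) * D t ω := by ring
    have hXint : Integrable (X t) μ := by
      apply Integrable.mono' (hDint.const_mul (2 * η t))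
        (hXmeas0 t ht).aestronglyMeasurable
      apply Filter.Eventually.of_forall
      intro ω
      rw [Real.norm_eq_abs, abs_of_nonneg (hX0 t ω)]
      exact hXleD ω
    have hsmul : (fun ω => (2 * η t) * D t ω) = (2 * η t) • (fun ω => D t ω) := by
      funext ω; simp [smul_eq_mul]
    have h2 := condExp_mono (μ := μ) (m := 𝓕 (t - 1)) hXint (hDint.const_mul (2 * η t))
      (Filter.Eventually.of_forall hXleD)
    have h3 := condExp_smul (μ := μ) (m := 𝓕 (t - 1)) (2 * η t) (fun ω => D t ω)
    filter_upwards [h2, h3] with ω hω2 hω3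
    have e1 : (fun ω => (2 * η t) * D t ω) = fun ω => ((2 * η t) • (fun ω => D t ω)) ω := by
      funext ω; simp [smul_eq_mul]
    have hσeq : (μ[fun ω => D t ω|𝓕 (t - 1)]) = σt t := by
      simp only [hDdef]
      exact (hσt t).symm
    calc (μ[X t|𝓕 (t - 1)]) ω ≤ (μ[fun ω => (2 * η t) * D t ω|𝓕 (t - 1)]) ω := hω2
      _ = ((2 * η t) • (μ[fun ω => D t ω|𝓕 (t - 1)])) ω := by
          rw [show (fun ω => (2 * η t) * D t ω) = (2 * η t) • (fun ω => D t ω) from hsmul]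
          exact hω3
      _ = (2 * η t) * σt t ω := by
          rw [Pi.smul_apply, smul_eq_mul, hσeq]
  -- norm of normalized vectors
  have hunorm : ∀ w : EuclideanSpace ℝ (Fin d), ‖(‖w‖⁻¹ • w)‖ ≤ 1 := by
    intro w
    rcases eq_or_ne w 0 with rfl | hw
    · simp
    · rw [norm_smul, Real.norm_eq_abs, abs_of_nonneg (inv_nonneg.mpr (norm_nonneg w)),
        inv_mul_cancel₀ (norm_ne_zero_iff.mpr hw)]
  -- distance of iterates from the start
  have hdist : ∀ ω n, ‖x (n + 1) ω - x₁‖ ≤ ∑ τ ∈ Finset.Icc 1 n, η τ := by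
    intro ω n
    induction n with
    | zero => simp [hx1 ω, Finset.Icc_eq_empty (show ¬(1:ℕ) ≤ 0 by omega)]
    | succ k ih =>
      rw [hrec (k + 1) ω (by omega)]
      have e1 : x (k + 1) ω - η (k + 1) • (‖g (k + 1) ω‖⁻¹ • g (k + 1) ω) - x₁
          = (x (k + 1) ω - x₁) - η (k + 1) • (‖g (k + 1) ω‖⁻¹ • g (k + 1) ω) := by abel
      rw [e1, Finset.sum_Icc_succ_top (show 1 ≤ k + 1 by omega)]
      have h2 : ‖η (k + 1) • (‖g (k + 1) ω‖⁻¹ • g (k + 1) ω)‖ ≤ η (k + 1) := by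
        rw [norm_smul, Real.norm_eq_abs, abs_of_pos (hη (k + 1))]
        nlinarith [hunorm (g (k + 1) ω), (hη (k + 1)).le, norm_nonneg (‖g (k + 1) ω‖⁻¹ • g (k + 1) ω)]
      calc ‖(x (k + 1) ω - x₁) - η (k + 1) • (‖g (k + 1) ω‖⁻¹ • g (k + 1) ω)‖
          ≤ ‖x (k + 1) ω - x₁‖ + ‖η (k + 1) • (‖g (k + 1) ω‖⁻¹ • g (k + 1) ω)‖ := norm_sub_le _ _
        _ ≤ (∑ τ ∈ Finset.Icc 1 k, η τ) + η (k + 1) := add_le_add ih h2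
  -- growth of the gradient norm
  have hgnorm : ∀ ω t, 1 ≤ t → ‖gradF (x t ω)‖ ≤ G1 + L * ∑ τ ∈ Finset.Icc 1 (t - 1), η τ := by
    intro ω t ht
    obtain ⟨k, rfl⟩ : ∃ k, t = k + 1 := ⟨t - 1, by omega⟩
    simp only [Nat.add_sub_cancel]
    have h1 : ‖gradF (x (k + 1) ω) - gradF x₁‖ ≤ L * ‖x (k + 1) ω - x₁‖ := hsmooth _ _
    have h2 := norm_sub_norm_le (gradF (x (k + 1) ω)) (gradF x₁)
    have h3 := hdist ω k
    have h4 : L * ‖x (k + 1) ω - x₁‖ ≤ L * ∑ τ ∈ Finset.Icc 1 k, η τ :=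
      mul_le_mul_of_nonneg_left h3 hL
    rw [hG1def]
    linarith
  -- uniform bound on X
  have hXc : ∀ t ω, 1 ≤ t → t ≤ T → X t ω ≤ c / 2 := by
    intro t ω ht htT
    have hmem : t ∈ Finset.Icc 1 T := Finset.mem_Icc.mpr ⟨ht, htT⟩
    have hηm : η t ≤ ηmax := Finset.le_sup' η hmem
    have hCm : η t * ∑ τ ∈ Finset.Icc 1 (t - 1), η τ ≤ C :=
      Finset.le_sup' (fun t => η t * ∑ τ ∈ Finset.Icc 1 (t - 1), η τ) hmem
    have hgn := hgnorm ω t ht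
    have h1 : min (2 * D t ω) (2 * ‖gradF (x t ω)‖) ≤ 2 * ‖gradF (x t ω)‖ := min_le_right _ _
    have hXu : X t ω = η t * min (2 * D t ω) (2 * ‖gradF (x t ω)‖) := by simp only [hXdef]
    have hsum0 : 0 ≤ ∑ τ ∈ Finset.Icc 1 (t - 1), η τ :=
      Finset.sum_nonneg fun i _ => (hη i).le
    have hG10 : 0 ≤ G1 := norm_nonneg _
    have h2 : X t ω ≤ η t * (2 * ‖gradF (x t ω)‖) := by
      rw [hXu]
      exact mul_le_mul_of_nonneg_left h1 (hη t).le
    have h3 : η t * ‖gradF (x t ω)‖ ≤ ηmax * G1 + L * (η t * ∑ τ ∈ Finset.Icc 1 (t - 1), η τ) := by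
      nlinarith [(hη t).le, mul_le_mul_of_nonneg_left hgn (hη t).le]
    have h4 : L * (η t * ∑ τ ∈ Finset.Icc 1 (t - 1), η τ) ≤ L * C :=
      mul_le_mul_of_nonneg_left hCm hL
    rw [hcdef, hKdef]
    nlinarith
  have hK0 : 0 ≤ K := by
    have h1 : η 1 ≤ ηmax := Finset.le_sup' η hT1
    have h2 : η 1 * ∑ τ ∈ Finset.Icc 1 (1 - 1 : ℕ), η τ ≤ C :=
      Finset.le_sup' (fun t => η t * ∑ τ ∈ Finset.Icc 1 (t - 1), η τ) hT1
    have h3 : (∑ τ ∈ Finset.Icc 1 (1 - 1 : ℕ), η τ) = 0 := by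
      simp [Finset.Icc_eq_empty (show ¬(1:ℕ) ≤ 0 by omega)]
    rw [h3, mul_zero] at h2
    have hG10 : 0 ≤ G1 := norm_nonneg _
    have h4 : 0 < η 1 := hη 1
    rw [hKdef]
    nlinarith
  -- the single-step descent inequality
  have hstep : ∀ ω t, 1 ≤ t →
      η t * ‖gradF (x t ω)‖ ≤ F (x t ω) - F (x (t + 1) ω) + L * η t ^ 2 + X t ω := by
    intro ω t ht
    have hd := descent_lemma F gradF L hL hgrad hsmooth (x t ω) (x (t + 1) ω)
    have hy : x (t + 1) ω - x t ω = -(η t • (‖g t ω‖⁻¹ • g t ω)) := by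
      rw [hrec t ω ht]; abel
    rw [hy] at hd
    have hi : (inner ℝ (gradF (x t ω)) (-(η t • (‖g t ω‖⁻¹ • g t ω))) : ℝ)
        = -(η t * inner ℝ (gradF (x t ω)) (‖g t ω‖⁻¹ • g t ω)) := by
      rw [inner_neg_right, real_inner_smul_right]
    rw [hi] at hd
    have hn : ‖-(η t • (‖g t ω‖⁻¹ • g t ω))‖ ^ 2 ≤ η t ^ 2 := by
      rw [norm_neg, norm_smul, Real.norm_eq_abs, abs_of_pos (hη t)]
      exact pow_le_pow_left₀ (mul_nonneg (hη t).le (norm_nonneg _))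
        (mul_le_of_le_one_right (hη t).le (hunorm _)) 2
    have hinner := inner_normalized_bound (gradF (x t ω)) (g t ω)
    have hLn : L * ‖-(η t • (‖g t ω‖⁻¹ • g t ω))‖ ^ 2 ≤ L * η t ^ 2 :=
      mul_le_mul_of_nonneg_left hn hL
    have hXe : X t ω = η t * min (2 * ‖g t ω - gradF (x t ω)‖) (2 * ‖gradF (x t ω)‖) := by
      simp only [hXdef, hDdef]
    have h5 := mul_le_mul_of_nonneg_left hinner (hη t).le
    have h6 := mul_sub (η t) (‖gradF (x t ω)‖)
      (min (2 * ‖g t ω - gradF (x t ω)‖) (2 * ‖gradF (x t ω)‖))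
    linarith [hd, hLn, h5, h6, hXe]
  -- telescoping
  have htel : ∀ ω n, ∑ t ∈ Finset.Icc 1 n, (F (x t ω) - F (x (t + 1) ω))
      = F (x 1 ω) - F (x (n + 1) ω) := by
    intro ω n
    induction n with
    | zero => simp [Finset.Icc_eq_empty (show ¬(1:ℕ) ≤ 0 by omega)]
    | succ k ih =>
      rw [Finset.sum_Icc_succ_top (show 1 ≤ k + 1 by omega), ih]
      ring
  -- pointwise key inequality
  have hkey : ∀ ω, ∑ t ∈ Finset.Icc 1 T, η t * ‖gradF (x t ω)‖
      ≤ Δ₁ + L * ∑ t ∈ Finset.Icc 1 T, η t ^ 2 + ∑ t ∈ Finset.Icc 1 T, X t ω := by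
    intro ω
    have h1 : ∑ t ∈ Finset.Icc 1 T, η t * ‖gradF (x t ω)‖
        ≤ ∑ t ∈ Finset.Icc 1 T, ((F (x t ω) - F (x (t + 1) ω)) + (L * η t ^ 2 + X t ω)) := by
      apply Finset.sum_le_sum
      intro t htm
      have := hstep ω t (Finset.mem_Icc.mp htm).1
      linarith
    rw [Finset.sum_add_distrib, htel ω T, Finset.sum_add_distrib] at h1
    have h2 : Fstar ≤ F (x (T + 1) ω) := hlb _
    have h3 : F (x 1 ω) = F x₁ := by rw [hx1 ω]
    have h4 : (∑ t ∈ Finset.Icc 1 T, L * η t ^ 2) = L * ∑ t ∈ Finset.Icc 1 T, η t ^ 2 := by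
      rw [Finset.mul_sum]
    rw [h3, h4] at h1
    linarith
  -- the good event
  set Good : Set Ω := {ω | ∑ t ∈ Finset.Icc 1 T, X t ω
      ≤ (∑ t ∈ Finset.Icc 1 T, 2 * σ' t ω) + c * Real.log (1 / δ)} with hGooddef
  have hGoodMeas : MeasurableSet Good := by
    apply measurableSet_le
    · exact Finset.measurable_sum _ fun t htm => hXmeas0 t (Finset.mem_Icc.mp htm).1
    · exact (Finset.measurable_sum _ fun t _ => (hσtmeas t).const_mul _ |>.const_mul 2).add
        measurable_const
  -- bound on the bad event
  have hBadLe : μ Goodᶜ ≤ ENNReal.ofReal δ := by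
    rcases lt_or_ge 0 c with hc0 | hc0
    · -- Markov via the supermartingale bound
      set W : Ω → ℝ := fun ω => Real.exp (∑ t ∈ Finset.Icc 1 T, (X t ω - 2 * σ' t ω) / c)
        with hWdef
      have hmgf : ∫ ω, W ω ∂μ ≤ 1 :=
        mgf_supermartingale_bound μ 𝓕 hle hmono X σ' c hc0 T
          (fun t h1 _ => hXmeasF t h1) hX0 hXc hσSM hσ'0 (fun t h1 h2 => hcond t h1 h2)
      have hσae : ∀ᵐ ω ∂μ, ∀ t, 0 ≤ σ' t ω := ae_all_iff.mpr hσ'0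
      have hWmeas : Measurable W := by
        apply Measurable.exp
        apply Finset.measurable_sum
        intro t htm
        simp only [hσ'def]
        exact ((hXmeas0 t (Finset.mem_Icc.mp htm).1).sub
          (((hσtmeas t).const_mul (2 * η t)).const_mul 2)).div_const c
      have hWbd : ∀ᵐ ω ∂μ, W ω ≤ Real.exp (T * (1 / 2)) := by
        filter_upwards [hσae] with ω hω
        apply Real.exp_le_exp.mpr
        calc ∑ t ∈ Finset.Icc 1 T, (X t ω - 2 * σ' t ω) / c
            ≤ ∑ t ∈ Finset.Icc 1 T, (1 / 2 : ℝ) := by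
              apply Finset.sum_le_sum
              intro t htm
              obtain ⟨h1, h2⟩ := Finset.mem_Icc.mp htm
              have := hXc t ω h1 h2
              have := hω t
              rw [div_le_iff₀ hc0]
              nlinarith
          _ = T * (1 / 2) := by
              rw [Finset.sum_const, Nat.card_Icc, Nat.add_sub_cancel, nsmul_eq_mul]
      have hWint : Integrable W μ := by
        apply bounded_integrable hWmeas.aestronglyMeasurable (Real.exp (T * (1 / 2)))
        filter_upwards [hWbd] with ω h
        rw [abs_of_nonneg (Real.exp_pos _).le]; exact h
      have hmarkov := mul_meas_ge_le_integral_of_nonneg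
        (Filter.Eventually.of_forall fun ω => (Real.exp_pos _).le) hWint (1 / δ)
      have hsub : Goodᶜ ⊆ {ω | 1 / δ ≤ W ω} := by
        intro ω hω
        simp only [hGooddef, Set.mem_compl_iff, Set.mem_setOf_eq, not_le] at hω
        have h1 : Real.log (1 / δ) < (∑ t ∈ Finset.Icc 1 T, (X t ω - 2 * σ' t ω)) / c := by
          rw [lt_div_iff₀ hc0]
          rw [Finset.sum_sub_distrib]
          linarith [hω]
        have h2 : W ω = Real.exp ((∑ t ∈ Finset.Icc 1 T, (X t ω - 2 * σ' t ω)) / c) := by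
          simp only [hWdef]
          exact congrArg Real.exp (Finset.sum_div _ _ _).symm
        rw [Set.mem_setOf_eq, h2, ← Real.exp_log (show (0:ℝ) < 1 / δ by positivity)]
        exact (Real.exp_le_exp.mpr h1.le)
      have htoReal : (μ {ω | 1 / δ ≤ W ω}).toReal ≤ δ := by
        have h1 : (0:ℝ) < 1 / δ := by positivity
        have h2 := le_trans hmarkov hmgf
        have h3 : (0:ℝ) ≤ (μ {ω | 1 / δ ≤ W ω}).toReal := ENNReal.toReal_nonneg
        calc (μ {ω | 1 / δ ≤ W ω}).toReal = δ * ((1 / δ) * (μ {ω | 1 / δ ≤ W ω}).toReal) := by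
              field_simp
          _ ≤ δ * 1 := by
              apply mul_le_mul_of_nonneg_left h2 hδ0.le
          _ = δ := mul_one δ
      calc μ Goodᶜ ≤ μ {ω | 1 / δ ≤ W ω} := measure_mono hsub
        _ = ENNReal.ofReal ((μ {ω | 1 / δ ≤ W ω}).toReal) :=
            (ENNReal.ofReal_toReal (measure_ne_top μ _)).symm
        _ ≤ ENNReal.ofReal δ := ENNReal.ofReal_le_ofReal htoReal
    · -- degenerate case: c = 0, so all X vanish
      have hc0' : c = 0 := le_antisymm hc0 (by rw [hcdef]; linarith)
      have hXzero : ∀ t ω, 1 ≤ t → t ≤ T → X t ω = 0 := by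
        intro t ω h1 h2
        have := hXc t ω h1 h2
        rw [hc0'] at this
        have := hX0 t ω
        linarith
      have hae : ∀ᵐ ω ∂μ, ∀ t, 0 ≤ σ' t ω := ae_all_iff.mpr hσ'0
      have hnull : μ {ω | ¬ ∀ t, 0 ≤ σ' t ω} = 0 := by
        rw [← ae_iff]; exact hae
      have hsub : Goodᶜ ⊆ {ω | ¬ ∀ t, 0 ≤ σ' t ω} := by
        intro ω hω
        simp only [hGooddef, Set.mem_compl_iff, Set.mem_setOf_eq, not_le] at hω
        by_contra hcontra
        simp only [Set.mem_setOf_eq, not_not] at hcontra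
        have h1 : ∑ t ∈ Finset.Icc 1 T, X t ω = 0 := by
          apply Finset.sum_eq_zero
          intro t htm
          obtain ⟨ha, hb⟩ := Finset.mem_Icc.mp htm
          exact hXzero t ω ha hb
        have h2 : 0 ≤ ∑ t ∈ Finset.Icc 1 T, 2 * σ' t ω :=
          Finset.sum_nonneg fun t _ => by linarith [hcontra t]
        rw [h1, hc0'] at hω
        simp at hω
        linarith
      calc μ Goodᶜ ≤ μ {ω | ¬ ∀ t, 0 ≤ σ' t ω} := measure_mono hsub
        _ = 0 := hnull
        _ ≤ ENNReal.ofReal δ := zero_le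
  -- Good is contained in the target event
  have hΔ0 : 0 ≤ Δ₁ := le_trans (by linarith [hlb x₁]) hΔ
  have hlog0 : 0 ≤ Real.log (1 / δ) :=
    Real.log_nonneg (by rw [le_div_iff₀ hδ0]; linarith)
  have hsubset : Good ⊆ {ω | ∑ t ∈ Finset.Icc 1 T,
              (η t / ∑ τ ∈ Finset.Icc 1 T, η τ) * ‖gradF (x t ω)‖ ≤
            (2 * Δ₁ + L * ∑ t ∈ Finset.Icc 1 T, (η t) ^ 2
                + 4 * ∑ t ∈ Finset.Icc 1 T, η t * σt t ω) /
              (∑ τ ∈ Finset.Icc 1 T, η τ)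
            + 12 * (((Finset.Icc 1 T).sup' (Finset.nonempty_Icc.mpr hT) η) * ‖gradF x₁‖
                  + ((Finset.Icc 1 T).sup' (Finset.nonempty_Icc.mpr hT)
                      (fun t => η t * ∑ τ ∈ Finset.Icc 1 (t - 1), η τ)) * L)
                * Real.log (1 / δ) / (∑ τ ∈ Finset.Icc 1 T, η τ)} := by
    intro ω hω
    simp only [hGooddef, Set.mem_setOf_eq] at hω ⊢
    have hσsum : (∑ t ∈ Finset.Icc 1 T, 2 * σ' t ω)
        = 4 * ∑ t ∈ Finset.Icc 1 T, η t * σt t ω := by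
      rw [Finset.mul_sum]
      apply Finset.sum_congr rfl
      intro t _
      simp only [hσ'def]
      ring
    rw [hσsum] at hω
    have hchain : ∑ t ∈ Finset.Icc 1 T, η t * ‖gradF (x t ω)‖
        ≤ (2 * Δ₁ + L * ∑ t ∈ Finset.Icc 1 T, η t ^ 2
            + 4 * ∑ t ∈ Finset.Icc 1 T, η t * σt t ω) + 12 * K * Real.log (1 / δ) := by
      have h1 := hkey ω
      have h2 : c * Real.log (1 / δ) ≤ 12 * K * Real.log (1 / δ) := by
        rw [hcdef]
        nlinarith [mul_nonneg hK0 hlog0]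
      linarith
    have hLHS : ∑ t ∈ Finset.Icc 1 T, (η t / S) * ‖gradF (x t ω)‖
        = (∑ t ∈ Finset.Icc 1 T, η t * ‖gradF (x t ω)‖) / S := by
      rw [Finset.sum_div]
      apply Finset.sum_congr rfl
      intro t _
      rw [div_mul_eq_mul_div]
    rw [hLHS, ← add_div]
    exact (div_le_div_iff_of_pos_right hSpos).mpr hchain
  calc ENNReal.ofReal (1 - δ) = 1 - ENNReal.ofReal δ := by
        rw [ENNReal.ofReal_sub 1 hδ0.le, ENNReal.ofReal_one]
    _ ≤ 1 - μ Goodᶜ := tsub_le_tsub_left hBadLe 1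
    _ = μ Good := by
        rw [← prob_compl_eq_one_sub hGoodMeas.compl, compl_compl]
    _ ≤ μ _ := measure_mono hsubset
end

section
/- Deterministic lower bound for normalized gradient descent with polynomial step-size: fix r ∈ (0,1) and η > 0. There exists a constant c > 0 (depending only on r and η) such that for all L, Δ₁ > 0 and all sufficiently small ε > 0, there exist an L-smooth function F : ℝ → ℝ bounded below and an initial point x₁ with F(x₁) − inf F ≤ Δ₁, such that for every horizon T ≤ c·( (Δ₁/ε)^{1/(1−r)} + (L/ε)^{1/r} ), normalized gradient descent x_{t+1} = x_t − η·T^{-r}·F'(x_t)/|F'(x_t)| run for T iterations from x₁ produces iterates with |F'(x_t)| > ε for all 1 ≤ t ≤ T. -/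
open Real

namespace NGDLB

noncomputable def Fn (ε L v x : ℝ) : ℝ := 2*ε/L * Real.sqrt (4*ε^2 + L^2*(x-v)^2)
noncomputable def Gn (ε L v x : ℝ) : ℝ :=
  2*ε*L*(x-v) / Real.sqrt (4*ε^2 + L^2*(x-v)^2)

variable {ε L v : ℝ}

lemma Rpos (hε : 0 < ε) (x : ℝ) : 0 < 4*ε^2 + L^2*(x-v)^2 := by positivity

lemma sqrtR_pos (hε : 0 < ε) (x : ℝ) :
    0 < Real.sqrt (4*ε^2 + L^2*(x-v)^2) :=
  Real.sqrt_pos.mpr (Rpos hε x)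

lemma sqrtR_ge (hε : 0 < ε) (x : ℝ) :
    2*ε ≤ Real.sqrt (4*ε^2 + L^2*(x-v)^2) := by
  rw [show 2*ε = Real.sqrt ((2*ε)^2) from (Real.sqrt_sq (by positivity)).symm]
  apply Real.sqrt_le_sqrt; nlinarith [sq_nonneg (L*(x-v))]

lemma hasDerivAt_sqrtR (hε : 0 < ε) (x : ℝ) :
    HasDerivAt (fun y => Real.sqrt (4*ε^2 + L^2*(y-v)^2))
      (2*L^2*(x-v) / (2*Real.sqrt (4*ε^2 + L^2*(x-v)^2))) x := by
  have h1 : HasDerivAt (fun y : ℝ => (y - v)^2) (2*(x-v)) x := by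
    simpa using ((hasDerivAt_id x).sub_const v).fun_pow 2
  have h2 : HasDerivAt (fun y : ℝ => 4*ε^2 + L^2*(y-v)^2) (2*L^2*(x-v)) x := by
    have := (h1.const_mul (L^2)).const_add (4*ε^2)
    refine this.congr_deriv ?_; ring
  exact h2.sqrt (ne_of_gt (Rpos hε x))

lemma hasDerivAt_Fn (hε : 0 < ε) (hL : 0 < L) (x : ℝ) :
    HasDerivAt (Fn ε L v) (Gn ε L v x) x := by
  have h := (hasDerivAt_sqrtR (L := L) (v := v) hε x).const_mul (2*ε/L)
  refine h.congr_deriv ?_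
  have hs := sqrtR_pos (L := L) (v := v) hε x
  rw [Gn]; field_simp

lemma hasDerivAt_Gn (hε : 0 < ε) (hL : 0 < L) (x : ℝ) :
    HasDerivAt (Gn ε L v)
      (8*ε^3*L / ((4*ε^2 + L^2*(x-v)^2) * Real.sqrt (4*ε^2 + L^2*(x-v)^2))) x := by
  have hnum : HasDerivAt (fun y : ℝ => 2*ε*L*(y-v)) (2*ε*L) x := by
    simpa using ((hasDerivAt_id x).sub_const v).const_mul (2*ε*L)
  have hs := sqrtR_pos (L := L) (v := v) hε x
  have h := hnum.div (hasDerivAt_sqrtR (L := L) (v := v) hε x) (ne_of_gt hs)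
  have hsq : Real.sqrt (4*ε^2 + L^2*(x-v)^2) * Real.sqrt (4*ε^2 + L^2*(x-v)^2)
      = 4*ε^2 + L^2*(x-v)^2 := Real.mul_self_sqrt (Rpos hε x).le
  refine h.congr_deriv ?_
  rw [div_eq_div_iff (by positivity) (by positivity), sub_mul]
  have h3 : 2*ε*L*(x-v) * (2*L^2*(x-v) / (2*Real.sqrt (4*ε^2 + L^2*(x-v)^2)))
      * ((4*ε^2 + L^2*(x-v)^2) * Real.sqrt (4*ε^2 + L^2*(x-v)^2))
      = 2*ε*L*(x-v)*(L^2*(x-v))*(4*ε^2 + L^2*(x-v)^2) := by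
    field_simp
  rw [h3]
  linear_combination (8*ε^3*L - 2*ε*L*(4*ε^2 + L^2*(x-v)^2) + 4*ε*L^3*(x-v)^2) * hsq

lemma lipschitz_Gn (hε : 0 < ε) (hL : 0 < L) (x y : ℝ) :
    |Gn ε L v x - Gn ε L v y| ≤ L * |x - y| := by
  have bound : ∀ z : ℝ,
      ‖8*ε^3*L / ((4*ε^2 + L^2*(z-v)^2) * Real.sqrt (4*ε^2 + L^2*(z-v)^2))‖ ≤ L := by
    intro z
    have h1 := sqrtR_ge (v := v) (L := L) hε z
    have h2 : 4*ε^2 ≤ 4*ε^2 + L^2*(z-v)^2 := by nlinarith [sq_nonneg (L*(z-v))]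
    have hprod : 8*ε^3 ≤ (4*ε^2 + L^2*(z-v)^2) * Real.sqrt (4*ε^2 + L^2*(z-v)^2) := by
      nlinarith [mul_le_mul h2 h1 (by positivity) (by positivity : (0:ℝ) ≤ 4*ε^2 + L^2*(z-v)^2)]
    have hpos : (0:ℝ) < (4*ε^2 + L^2*(z-v)^2) * Real.sqrt (4*ε^2 + L^2*(z-v)^2) := by
      have := sqrtR_pos (v := v) (L := L) hε z
      have := Rpos (v := v) (L := L) hε z
      positivity
    rw [Real.norm_eq_abs, abs_of_nonneg (by positivity), div_le_iff₀ hpos]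
    nlinarith
  have := Convex.norm_image_sub_le_of_norm_hasDerivWithin_le
    (f := Gn ε L v)
    (f' := fun z => 8*ε^3*L / ((4*ε^2 + L^2*(z-v)^2) * Real.sqrt (4*ε^2 + L^2*(z-v)^2)))
    (s := Set.univ)
    (fun z _ => (hasDerivAt_Gn hε hL z).hasDerivWithinAt)
    (fun z _ => bound z) convex_univ (Set.mem_univ y) (Set.mem_univ x)
  simpa [Real.norm_eq_abs] using this

lemma Gn_neg (hε : 0 < ε) (hL : 0 < L) {x : ℝ} (hx : x ≤ v - 2*ε/L) :
    Gn ε L v x < -ε := by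
  have hs := sqrtR_pos (v := v) (L := L) hε x
  have hLs : 2*ε ≤ L*(v-x) := by
    have : 2*ε/L ≤ v - x := by linarith
    calc 2*ε = L * (2*ε/L) := by field_simp
    _ ≤ L*(v-x) := by nlinarith
  have h1 : Real.sqrt (4*ε^2 + L^2*(x-v)^2) < 2*L*(v-x) := by
    rw [Real.sqrt_lt' (by nlinarith)]
    nlinarith
  rw [Gn, div_lt_iff₀ hs]
  nlinarith

lemma Gn_pos (hε : 0 < ε) (hL : 0 < L) {x : ℝ} (hx : v + 2*ε/L ≤ x) :
    ε < Gn ε L v x := by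
  have hs := sqrtR_pos (v := v) (L := L) hε x
  have hLs : 2*ε ≤ L*(x-v) := by
    have : 2*ε/L ≤ x - v := by linarith
    calc 2*ε = L * (2*ε/L) := by field_simp
    _ ≤ L*(x-v) := by nlinarith
  have h1 : Real.sqrt (4*ε^2 + L^2*(x-v)^2) < 2*L*(x-v) := by
    rw [Real.sqrt_lt' (by nlinarith)]
    nlinarith
  rw [Gn, lt_div_iff₀ hs]
  nlinarith

lemma Fn_lb (hε : 0 < ε) (hL : 0 < L) (x : ℝ) : 4*ε^2/L ≤ Fn ε L v x := by
  have h := sqrtR_ge (v := v) (L := L) hε x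
  rw [Fn]
  calc 4*ε^2/L = 2*ε/L*(2*ε) := by ring
  _ ≤ 2*ε/L * Real.sqrt (4*ε^2 + L^2*(x-v)^2) := mul_le_mul_of_nonneg_left h (by positivity)

lemma Fn_zero (hε : 0 < ε) (hL : 0 < L) (hv : 0 ≤ v) :
    Fn ε L v 0 ≤ 4*ε^2/L + 2*ε*v := by
  have h : Real.sqrt (4*ε^2 + L^2*(0-v)^2) ≤ 2*ε + L*v := by
    rw [show 2*ε + L*v = Real.sqrt ((2*ε + L*v)^2) from (Real.sqrt_sq (by positivity)).symm]
    apply Real.sqrt_le_sqrt; nlinarith [mul_nonneg (mul_nonneg hε.le hL.le) hv]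
  rw [Fn]
  have h2 : 2*ε/L * Real.sqrt (4*ε^2 + L^2*(0-v)^2) ≤ 2*ε/L * (2*ε + L*v) :=
    mul_le_mul_of_nonneg_left h (by positivity)
  calc 2*ε/L * Real.sqrt (4*ε^2 + L^2*(0-v)^2) ≤ 2*ε/L * (2*ε + L*v) := h2
  _ = 4*ε^2/L + 2*ε*v := by field_simp; ring

lemma instance_props (hε : 0 < ε) (hL : 0 < L) (hv : 0 ≤ v) :
    BddBelow (Set.range (Fn ε L v)) ∧
    Fn ε L v 0 - sInf (Set.range (Fn ε L v)) ≤ 2*ε*v := by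
  constructor
  · exact ⟨4*ε^2/L, by rintro y ⟨x, rfl⟩; exact Fn_lb hε hL x⟩
  · have h1 : 4*ε^2/L ≤ sInf (Set.range (Fn ε L v)) :=
      le_csInf (Set.range_nonempty _) (by rintro y ⟨x, rfl⟩; exact Fn_lb hε hL x)
    have h2 := Fn_zero hε hL hv
    linarith

end NGDLB

set_option maxHeartbeats 1600000 in
/-- deterministic lower bound for normalized gradient descent with polynomial
step-size `η·T^{-r}`: there is a constant `c > 0` depending only on `r` and `η` such that for
all `L, Δ₁ > 0` and all sufficiently small `ε > 0` there is a hard `L`-smooth instance with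
initialization gap at most `Δ₁` on which every horizon
`T ≤ c·((Δ₁/ε)^{1/(1−r)} + (L/ε)^{1/r})` produces only iterates with `|F'(x_t)| > ε`. -/
theorem ngd_deterministic_lower_bound (r η : ℝ) (hr0 : 0 < r) (hr1 : r < 1) (hη : 0 < η) :
    ∃ c : ℝ, 0 < c ∧
      ∀ L Δ₁ : ℝ, 0 < L → 0 < Δ₁ →
      ∃ ε₀ : ℝ, 0 < ε₀ ∧
        ∀ ε : ℝ, 0 < ε → ε < ε₀ →
        ∃ (F : ℝ → ℝ) (F' : ℝ → ℝ) (x₁ : ℝ),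
          -- F is differentiable with derivative F' and is L-smooth
          (∀ x, HasDerivAt F (F' x) x) ∧
          (∀ x y, |F' x - F' y| ≤ L * |x - y|) ∧
          -- F is bounded below, with initialization gap at most Δ₁
          BddBelow (Set.range F) ∧
          F x₁ - sInf (Set.range F) ≤ Δ₁ ∧
          ∀ T : ℕ, (T : ℝ) ≤ c * ((Δ₁ / ε) ^ ((1 : ℝ) / (1 - r)) + (L / ε) ^ ((1 : ℝ) / r)) →
          ∀ x : ℕ → ℝ, x 1 = x₁ →
          -- normalized (sign) gradient descent with step-size η·T^{-r}
          (∀ t : ℕ, 1 ≤ t →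
            x (t + 1) = x t - η * (T : ℝ) ^ (-r) * (F' (x t) / |F' (x t)|)) →
          ∀ t ∈ Finset.Icc 1 T, ε < |F' (x t)| := by
  classical
  have h1r : (0:ℝ) < 1 - r := by linarith
  set c₁ : ℝ := (1/(4*η)) ^ ((1:ℝ)/(1-r)) with hc₁
  set c₂ : ℝ := (η/6) ^ ((1:ℝ)/r) with hc₂
  have hc₁pos : 0 < c₁ := Real.rpow_pos_of_pos (by positivity) _
  have hc₂pos : 0 < c₂ := Real.rpow_pos_of_pos (by positivity) _
  refine ⟨min c₁ c₂ / 2, by positivity, ?_⟩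
  set c : ℝ := min c₁ c₂ / 2 with hcdef
  have hcpos : 0 < c := by positivity
  intro L Δ₁ hL hΔ
  refine ⟨Real.sqrt (L*Δ₁) / 3, by positivity, ?_⟩
  intro ε hε hεs
  have hε2 : 8*ε^2 ≤ L*Δ₁ := by
    have h9 : ε^2 < L*Δ₁/9 := by
      have := Real.sq_sqrt (show (0:ℝ) ≤ L*Δ₁ by positivity)
      nlinarith [Real.sqrt_nonneg (L*Δ₁)]
    nlinarith
  set A : ℝ := (Δ₁/ε) ^ ((1:ℝ)/(1-r)) with hAdef
  set B : ℝ := (L/ε) ^ ((1:ℝ)/r) with hBdef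
  have hApos : 0 < A := Real.rpow_pos_of_pos (by positivity) _
  have hBpos : 0 < B := Real.rpow_pos_of_pos (by positivity) _
  have h2c₁ : (2*c) ^ (1-r) ≤ 1/(4*η) := by
    have h1 : (2*c) ^ (1-r) ≤ c₁ ^ (1-r) := by
      apply Real.rpow_le_rpow (by positivity) _ h1r.le
      have : 2*c = min c₁ c₂ := by rw [hcdef]; ring
      rw [this]; exact min_le_left _ _
    have h2 : c₁ ^ (1-r) = 1/(4*η) := by
      rw [hc₁, ← Real.rpow_mul (by positivity), one_div_mul_cancel (ne_of_gt h1r),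
        Real.rpow_one]
    linarith
  have h2c₂ : (2*c) ^ r ≤ η/6 := by
    have h1 : (2*c) ^ r ≤ c₂ ^ r := by
      apply Real.rpow_le_rpow (by positivity) _ hr0.le
      have : 2*c = min c₁ c₂ := by rw [hcdef]; ring
      rw [this]; exact min_le_right _ _
    have h2 : c₂ ^ r = η/6 := by
      rw [hc₂, ← Real.rpow_mul (by positivity), one_div_mul_cancel (ne_of_gt hr0),
        Real.rpow_one]
    linarith
  by_cases hAB : B ≤ A
  · -- travel-dominated regime: valley at v = Δ₁/(2ε)
    set v : ℝ := Δ₁/(2*ε) with hvdef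
    have hv0 : 0 ≤ v := by positivity
    obtain ⟨hbdd, hgap⟩ := NGDLB.instance_props (v := v) hε hL hv0
    refine ⟨NGDLB.Fn ε L v, NGDLB.Gn ε L v, 0, NGDLB.hasDerivAt_Fn hε hL,
      NGDLB.lipschitz_Gn hε hL, hbdd, ?_, ?_⟩
    · have : 2*ε*v = Δ₁ := by rw [hvdef]; field_simp
      linarith
    · intro T hT x hx1 hrec t ht
      simp only [Finset.mem_Icc] at ht
      obtain ⟨ht1, htT⟩ := ht
      have hT1 : 1 ≤ T := le_trans ht1 htT
      have hTpos : (0:ℝ) < T := by exact_mod_cast hT1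
      set δ : ℝ := η * (T:ℝ) ^ (-r) with hδdef
      have hδpos : 0 < δ := by
        have := Real.rpow_pos_of_pos hTpos (-r); positivity
      -- bound on T * δ
      have hTle : (T:ℝ) ≤ 2*c*A := by nlinarith [hT]
      have hApow : A ^ (1-r) = Δ₁/ε := by
        rw [hAdef, ← Real.rpow_mul (by positivity), one_div_mul_cancel (ne_of_gt h1r),
          Real.rpow_one]
      have hTpow : (T:ℝ) ^ (1-r) ≤ 1/(4*η) * (Δ₁/ε) := by
        calc (T:ℝ) ^ (1-r) ≤ (2*c*A) ^ (1-r) :=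
              Real.rpow_le_rpow (Nat.cast_nonneg T) hTle h1r.le
        _ = (2*c) ^ (1-r) * A ^ (1-r) := Real.mul_rpow (by positivity) hApos.le
        _ ≤ 1/(4*η) * (Δ₁/ε) := by
            rw [hApow]
            apply mul_le_mul_of_nonneg_right h2c₁ (by positivity)
      have hTδ : (T:ℝ) * δ ≤ Δ₁/(4*ε) := by
        have hsplit : (T:ℝ) ^ (1-r) = (T:ℝ) * (T:ℝ) ^ (-r) := by
          rw [show (1:ℝ) - r = 1 + (-r) by ring, Real.rpow_add hTpos, Real.rpow_one]
        have : (T:ℝ) * δ = η * (T:ℝ) ^ (1-r) := by rw [hδdef, hsplit]; ring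
        rw [this]
        calc η * (T:ℝ) ^ (1-r) ≤ η * (1/(4*η) * (Δ₁/ε)) :=
              mul_le_mul_of_nonneg_left hTpow hη.le
        _ = Δ₁/(4*ε) := by field_simp
      have hvfar : Δ₁/(4*ε) ≤ v - 2*ε/L := by
        have e1 : 2*ε/L ≤ Δ₁/(4*ε) := by
          rw [div_le_div_iff₀ hL (by positivity)]; nlinarith
        have e2 : v = 2*(Δ₁/(4*ε)) := by rw [hvdef]; field_simp; ring
        linarith
      have hgood : ∀ n : ℕ, 1 ≤ n → n ≤ T → ((n:ℝ)-1)*δ ≤ v - 2*ε/L := by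
        intro n hn1 hnT
        have hc : (n:ℝ) ≤ (T:ℝ) := by exact_mod_cast hnT
        have : ((n:ℝ)-1)*δ ≤ (T:ℝ)*δ := by nlinarith
        linarith
      have key : ∀ n : ℕ, 1 ≤ n → n ≤ T → x n = ((n:ℝ)-1)*δ := by
        intro n hn1
        induction n, hn1 using Nat.le_induction with
        | base => intro _; rw [hx1]; norm_num
        | succ m hm ih =>
          intro hmT
          have hxm : x m = ((m:ℝ)-1)*δ := ih (by omega)
          have hneg : NGDLB.Gn ε L v (x m) < -ε := by
            apply NGDLB.Gn_neg hε hL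
            rw [hxm]; exact hgood m hm (by omega)
          have hne : NGDLB.Gn ε L v (x m) < 0 := by linarith
          have hdiv : NGDLB.Gn ε L v (x m) / |NGDLB.Gn ε L v (x m)| = -1 := by
            rw [abs_of_neg hne, div_neg, div_self hne.ne]
          have := hrec m hm
          rw [this, hdiv, hxm]
          push_cast
          ring
      have hx_t := key t ht1 htT
      have hneg : NGDLB.Gn ε L v (x t) < -ε := by
        apply NGDLB.Gn_neg hε hL
        rw [hx_t]; exact hgood t ht1 htT
      rw [abs_of_neg (by linarith : NGDLB.Gn ε L v (x t) < 0)]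
      linarith
  · -- curvature-dominated regime: valley at v = 4ε/L, iterates 2-cycle over it
    push_neg at hAB
    set v : ℝ := 4*ε/L with hvdef
    have hv0 : 0 ≤ v := by positivity
    obtain ⟨hbdd, hgap⟩ := NGDLB.instance_props (v := v) hε hL hv0
    refine ⟨NGDLB.Fn ε L v, NGDLB.Gn ε L v, 0, NGDLB.hasDerivAt_Fn hε hL,
      NGDLB.lipschitz_Gn hε hL, hbdd, ?_, ?_⟩
    · have e1 : 2*ε*v = 8*ε^2/L := by rw [hvdef]; field_simp; ring
      have e2 : 8*ε^2/L ≤ Δ₁ := by rw [div_le_iff₀ hL]; nlinarith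
      linarith
    · intro T hT x hx1 hrec t ht
      simp only [Finset.mem_Icc] at ht
      obtain ⟨ht1, htT⟩ := ht
      have hT1 : 1 ≤ T := le_trans ht1 htT
      have hTpos : (0:ℝ) < T := by exact_mod_cast hT1
      set δ : ℝ := η * (T:ℝ) ^ (-r) with hδdef
      have hδpos : 0 < δ := by
        have := Real.rpow_pos_of_pos hTpos (-r); positivity
      have hTle : (T:ℝ) ≤ 2*c*B := by nlinarith [hT]
      have hBpow : B ^ r = L/ε := by
        rw [hBdef, ← Real.rpow_mul (by positivity), one_div_mul_cancel (ne_of_gt hr0),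
          Real.rpow_one]
      have hTrpos : 0 < (T:ℝ) ^ r := Real.rpow_pos_of_pos hTpos r
      have hTr : (T:ℝ) ^ r ≤ η/6 * (L/ε) := by
        calc (T:ℝ) ^ r ≤ (2*c*B) ^ r := Real.rpow_le_rpow (Nat.cast_nonneg T) hTle hr0.le
        _ = (2*c) ^ r * B ^ r := Real.mul_rpow (by positivity) hBpos.le
        _ ≤ η/6 * (L/ε) := by
            rw [hBpow]
            apply mul_le_mul_of_nonneg_right h2c₂ (by positivity)
      have hδ6 : 6*ε/L ≤ δ := by
        have hM : (0:ℝ) < η/6 * (L/ε) := by positivity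
        have hinv : (η/6 * (L/ε))⁻¹ ≤ ((T:ℝ) ^ r)⁻¹ := by
          apply inv_anti₀ hTrpos hTr
        have hneg : (T:ℝ) ^ (-r) = ((T:ℝ) ^ r)⁻¹ :=
          Real.rpow_neg (Nat.cast_nonneg T) r
        have e1 : η * (η/6 * (L/ε))⁻¹ = 6*ε/L := by field_simp
        calc 6*ε/L = η * (η/6 * (L/ε))⁻¹ := e1.symm
        _ ≤ η * ((T:ℝ) ^ r)⁻¹ := mul_le_mul_of_nonneg_left hinv hη.le
        _ = δ := by rw [hδdef, hneg]
      have hGn0 : NGDLB.Gn ε L v 0 < -ε := by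
        apply NGDLB.Gn_neg hε hL
        have : v - 2*ε/L = 2*ε/L := by rw [hvdef]; field_simp; ring
        rw [this]; positivity
      have hGnδ : ε < NGDLB.Gn ε L v δ := by
        apply NGDLB.Gn_pos hε hL
        have : v + 2*ε/L = 6*ε/L := by rw [hvdef]; field_simp; ring
        rw [this]; exact hδ6
      have key : ∀ n : ℕ, 1 ≤ n → x n = 0 ∨ x n = δ := by
        intro n hn1
        induction n, hn1 using Nat.le_induction with
        | base => left; exact hx1
        | succ m hm ih =>
          rcases ih with h0 | hδ'
          · right
            have hne : NGDLB.Gn ε L v (x m) < 0 := by rw [h0]; linarith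
            have hdiv : NGDLB.Gn ε L v (x m) / |NGDLB.Gn ε L v (x m)| = -1 := by
              rw [abs_of_neg hne, div_neg, div_self hne.ne]
            rw [hrec m hm, hdiv, h0]; ring
          · left
            have hne : 0 < NGDLB.Gn ε L v (x m) := by rw [hδ']; linarith
            have hdiv : NGDLB.Gn ε L v (x m) / |NGDLB.Gn ε L v (x m)| = 1 := by
              rw [abs_of_pos hne, div_self hne.ne']
            rw [hrec m hm, hdiv, hδ']; ring
      rcases key t ht1 with h0 | hδ'
      · rw [h0, abs_of_neg (by linarith : NGDLB.Gn ε L v 0 < 0)]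
        linarith
      · rw [hδ', abs_of_pos (by linarith : 0 < NGDLB.Gn ε L v δ)]
        linarith
end

section
/- Adversarial heavy-tailed oracle forces large batch sizes: let p ∈ (1,2], σ > 0, and μ ∈ (0, σ/4]. There exists a real-valued random variable X with E[X] = μ and E[|X − μ|^p] ≤ σ^p such that for every batch size B ∈ ℕ with B ≤ (1/2)·(σ/(4μ))^{p/(p−1)}, if X₁, …, X_B are i.i.d. copies of X, then P( (1/B)·∑_{i=1}^B X_i = −μ ) ≥ 1/2; in particular, the sample mean of the batch has the opposite sign of the true mean with probability at least 1/2. -/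
open MeasureTheory ProbabilityTheory Real

lemma my_integrable_dirac {f : ℝ → ℝ} (hf : Measurable f) (a : ℝ) :
    Integrable f (Measure.dirac a) := by
  refine ⟨hf.aestronglyMeasurable, ?_⟩
  rw [HasFiniteIntegral, lintegral_dirac]
  exact ENNReal.coe_lt_top

lemma my_integral_two_point {q m a : ℝ} (hq0 : 0 ≤ q) (hq1 : q ≤ 1) {g : ℝ → ℝ}
    (hg : Measurable g) :
    (∫ x, g x ∂((ENNReal.ofReal (1 - q)) • Measure.dirac (-m)
        + (ENNReal.ofReal q) • Measure.dirac a)) = (1 - q) * g (-m) + q * g a := by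
  rw [integral_add_measure
      (((my_integrable_dirac hg (-m))).smul_measure ENNReal.ofReal_ne_top)
      (((my_integrable_dirac hg a)).smul_measure ENNReal.ofReal_ne_top),
    integral_smul_measure, integral_smul_measure, integral_dirac, integral_dirac,
    ENNReal.toReal_ofReal (by linarith), ENNReal.toReal_ofReal hq0]
  simp [smul_eq_mul]

/-- adversarial heavy-tailed oracle forcing large batch sizes: for
`p ∈ (1,2]`, `σ > 0` and mean `m ∈ (0, σ/4]` there is a real random variable `X` with mean `m`
and `p`-th central moment at most `σ^p` such that for every batch size
`B ≤ (1/2)·(σ/(4m))^{p/(p−1)}`, the sample mean of `B` i.i.d. copies of `X` equals `−m`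
(in particular has the opposite sign of the true mean) with probability at least `1/2`. -/
theorem adversarial_oracle_forces_large_batches
    (p σ m : ℝ) (hp1 : 1 < p) (hp2 : p ≤ 2) (hσ : 0 < σ) (hm : 0 < m) (hmσ : m ≤ σ / 4) :
    ∃ (μ : Measure ℝ) (X : ℝ → ℝ), IsProbabilityMeasure μ ∧ Measurable X ∧
      -- X has mean m and p-th central moment at most σ^p
      (∫ ω, X ω ∂μ) = m ∧
      (∫ ω, |X ω - m| ^ p ∂μ) ≤ σ ^ p ∧
      -- for every admissible batch size, the batch mean of i.i.d. copies of X equals −m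
      -- with probability at least 1/2
      (∀ B : ℕ, 1 ≤ B → (B : ℝ) ≤ (1 / 2) * (σ / (4 * m)) ^ (p / (p - 1)) →
        ∀ (Ω' : Type*) [MeasurableSpace Ω'] (μ' : Measure Ω') [IsProbabilityMeasure μ']
          (Y : Fin B → Ω' → ℝ),
          (∀ i, Measurable (Y i)) →
          iIndepFun Y μ' →
          (∀ i, Measure.map (Y i) μ' = Measure.map X μ) →
          ENNReal.ofReal (1 / 2) ≤ μ' {ω | (1 / (B : ℝ)) * ∑ i, Y i ω = -m}) := by
  have hp0 : 0 < p - 1 := by linarith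
  set q : ℝ := (4 * m / σ) ^ (p / (p - 1)) with hqdef
  have hb0 : 0 < 4 * m / σ := by positivity
  have hq0 : 0 < q := Real.rpow_pos_of_pos hb0 _
  have hbase : 4 * m / σ ≤ 1 := by rw [div_le_one hσ]; linarith
  have hq1 : q ≤ 1 := Real.rpow_le_one hb0.le hbase (by positivity)
  set a : ℝ := m * (2 - q) / q with hadef
  have ha0 : 0 < a := by
    apply div_pos _ hq0
    apply mul_pos hm; linarith
  set μ : Measure ℝ := (ENNReal.ofReal (1 - q)) • Measure.dirac (-m)
    + (ENNReal.ofReal q) • Measure.dirac a with hμdef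
  have hprob : IsProbabilityMeasure μ := by
    constructor
    rw [hμdef]
    simp only [Measure.add_apply, Measure.smul_apply, smul_eq_mul,
      MeasureTheory.measure_univ, mul_one]
    rw [← ENNReal.ofReal_add (by linarith) hq0.le]
    norm_num
  have hppos : (0:ℝ) ≤ p := by linarith
  have h2m : (0:ℝ) ≤ 2 * m := by linarith
  have hqinv : q ^ (1 - p) = (σ / (4 * m)) ^ p := by
    rw [hqdef, ← Real.rpow_mul hb0.le]
    have he : p / (p - 1) * (1 - p) = -p := by field_simp; ring
    rw [he, Real.rpow_neg hb0.le, ← Real.inv_rpow hb0.le, inv_div]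
  refine ⟨μ, id, hprob, measurable_id, ?_, ?_, ?_⟩
  · rw [show (∫ ω, id ω ∂μ) = (1 - q) * id (-m) + q * id a from
      my_integral_two_point hq0.le hq1 measurable_id]
    simp only [id, hadef]
    field_simp
    ring
  · have hgm : Measurable (fun x : ℝ => |x - m| ^ p) := by
      exact ((Real.continuous_rpow_const (by linarith)).comp
        ((continuous_id.sub continuous_const).abs)).measurable
    rw [show (∫ ω, |id ω - m| ^ p ∂μ)
        = (1 - q) * |(-m) - m| ^ p + q * |a - m| ^ p from
      my_integral_two_point hq0.le hq1 hgm]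
    have hval1 : |(-m) - m| = 2 * m := by
      rw [show (-m) - m = -(2*m) by ring, abs_neg, abs_of_nonneg (by linarith)]
    have hdivnn : (0:ℝ) ≤ (1 - q) / q := div_nonneg (by linarith) hq0.le
    have hval2 : |a - m| = 2 * m * ((1 - q) / q) := by
      rw [show a - m = 2 * m * ((1 - q) / q) by rw [hadef]; field_simp; ring]
      exact abs_of_nonneg (mul_nonneg h2m hdivnn)
    rw [hval1, hval2]
    have hkey : 2 * m ≤ σ / 2 := by linarith
    have hbound1 : (2*m) ^ p ≤ (σ/2) ^ p := Real.rpow_le_rpow h2m hkey hppos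
    have hterm1 : (1 - q) * (2*m) ^ p ≤ (σ/2) ^ p := by
      calc (1 - q) * (2*m) ^ p ≤ 1 * (2*m) ^ p := by
            apply mul_le_mul_of_nonneg_right (by linarith) (Real.rpow_nonneg h2m p)
        _ = (2*m) ^ p := one_mul _
        _ ≤ (σ/2) ^ p := hbound1
    have hterm2 : q * (2 * m * ((1 - q) / q)) ^ p ≤ (σ/2) ^ p := by
      rw [Real.mul_rpow h2m hdivnn]
      have hr : ((1 - q) / q) ^ p ≤ (q⁻¹) ^ p := by
        apply Real.rpow_le_rpow hdivnn _ hppos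
        rw [div_le_iff₀ hq0, inv_mul_cancel₀ hq0.ne']
        linarith
      have hq1p : q * (q⁻¹) ^ p = q ^ (1 - p) := by
        rw [show q⁻¹ = q ^ (-1 : ℝ) from (Real.rpow_neg_one q).symm,
          ← Real.rpow_mul hq0.le,
          show (1 - p) = 1 + (-1) * p by ring, Real.rpow_add hq0, Real.rpow_one]
      calc q * ((2*m) ^ p * ((1 - q) / q) ^ p)
          ≤ q * ((2*m) ^ p * (q⁻¹) ^ p) := by
            apply mul_le_mul_of_nonneg_left _ hq0.le
            exact mul_le_mul_of_nonneg_left hr (Real.rpow_nonneg h2m p)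
        _ = (2*m) ^ p * (q * (q⁻¹) ^ p) := by ring
        _ = (2*m) ^ p * q ^ (1 - p) := by rw [hq1p]
        _ = (2*m) ^ p * (σ / (4*m)) ^ p := by rw [hqinv]
        _ = (2 * m * (σ / (4*m))) ^ p := (Real.mul_rpow h2m (by positivity)).symm
        _ = (σ/2) ^ p := by
            congr 1
            field_simp
            ring
    have hfin : (σ/2) ^ p + (σ/2) ^ p ≤ σ ^ p := by
      rw [Real.div_rpow hσ.le (by norm_num : (0:ℝ) ≤ 2)]
      rw [← add_div, div_le_iff₀ (Real.rpow_pos_of_pos two_pos p)]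
      have h2p : (2:ℝ) ≤ 2 ^ p := by
        nth_rewrite 1 [← Real.rpow_one 2]
        exact Real.rpow_le_rpow_of_exponent_le (by norm_num) hp1.le
      nlinarith [Real.rpow_nonneg hσ.le p]
    calc (1 - q) * (2*m) ^ p + q * (2 * m * ((1 - q) / q)) ^ p
        ≤ (σ/2) ^ p + (σ/2) ^ p := add_le_add hterm1 hterm2
      _ ≤ σ ^ p := hfin
  · intro B hB1 hB2 Ω' _ μ' _ Y hYm hYind hYmap
    have hinv : (σ / (4 * m)) ^ (p / (p - 1)) = q⁻¹ := by
      rw [hqdef, ← Real.inv_rpow hb0.le, inv_div]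
    rw [hinv] at hB2
    have hqB : q * B ≤ 1 / 2 := by
      have h := mul_le_mul_of_nonneg_left hB2 hq0.le
      calc q * B ≤ q * (1 / 2 * q⁻¹) := h
        _ = 1 / 2 := by field_simp
    have hane : a ≠ -m := ne_of_gt (by linarith)
    have hμsing : μ {-m} = ENNReal.ofReal (1 - q) := by
      rw [hμdef]
      have hda : (Measure.dirac a) {-m} = 0 := by
        rw [Measure.dirac_apply]
        simp [Set.indicator_apply, hane]
      simp only [Measure.add_apply, Measure.smul_apply, smul_eq_mul, hda,
        Measure.dirac_apply_of_mem (Set.mem_singleton (-m)), mul_one, mul_zero, add_zero]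
    have hYi : ∀ i, μ' (Y i ⁻¹' {-m}) = ENNReal.ofReal (1 - q) := by
      intro i
      rw [← Measure.map_apply (hYm i) (measurableSet_singleton _), hYmap i,
        Measure.map_id, hμsing]
    have hE : μ' (⋂ i ∈ Finset.univ, Y i ⁻¹' {-m}) = ENNReal.ofReal ((1 - q) ^ B) := by
      rw [hYind.measure_inter_preimage_eq_mul Finset.univ
        (sets := fun _ => {-m}) (fun i _ => measurableSet_singleton (-m))]
      simp only [hYi]
      rw [Finset.prod_const, Finset.card_univ, Fintype.card_fin,
        ← ENNReal.ofReal_pow (by linarith)]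
    have hBne : (B:ℝ) ≠ 0 := Nat.cast_ne_zero.mpr (by omega)
    have hsub : (⋂ i ∈ Finset.univ, Y i ⁻¹' {-m})
        ⊆ {ω | (1 / (B : ℝ)) * ∑ i, Y i ω = -m} := by
      intro ω hω
      simp only [Set.mem_iInter, Set.mem_preimage, Set.mem_singleton_iff,
        Finset.mem_univ, forall_const] at hω
      have hsum : ∑ i, Y i ω = B * (-m) := by
        rw [Finset.sum_congr rfl (fun i _ => hω i), Finset.sum_const,
          Finset.card_univ, Fintype.card_fin, nsmul_eq_mul]
      simp only [Set.mem_setOf_eq, hsum]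
      field_simp
    have hhalf : (1:ℝ) / 2 ≤ (1 - q) ^ B := by
      have hb := one_add_mul_le_pow (show (-2:ℝ) ≤ -q by linarith) B
      rw [show (1:ℝ) + -q = 1 - q by ring] at hb
      nlinarith
    calc ENNReal.ofReal (1 / 2) ≤ ENNReal.ofReal ((1 - q) ^ B) :=
          ENNReal.ofReal_le_ofReal hhalf
      _ = μ' (⋂ i ∈ Finset.univ, Y i ⁻¹' {-m}) := hE.symm
      _ ≤ μ' {ω | (1 / (B : ℝ)) * ∑ i, Y i ω = -m} := measure_mono hsub
end

section
/- Vectorized von Bahr–Esseen inequality with weights: let p ∈ [1,2], let X₁, …, X_n be independent random vectors in ℝ^d with E[X_i] = 0 and E[‖X_i‖^p] < ∞ for each i (norms Euclidean), and let a₁, …, a_n be real numbers. Then E[ ‖∑_{i=1}^n a_i·X_i‖^p ] ≤ 2·∑_{i=1}^n |a_i|^p·E[‖X_i‖^p]. -/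
open MeasureTheory ProbabilityTheory Real NNReal

lemma aux_nnreal {p : ℝ} (hp1 : 1 ≤ p) (hp2 : p ≤ 2) (A B C D : ℝ≥0)
    (hq : A ^ (2:ℝ) + B ^ (2:ℝ) = 2 * C ^ (2:ℝ) + 2 * D ^ (2:ℝ)) :
    A ^ p + B ^ p ≤ 2 * C ^ p + 2 * D ^ p := by
  have hp0 : (0:ℝ) < p := lt_of_lt_of_le zero_lt_one hp1
  have h2p : (1:ℝ) ≤ 2 / p := (one_le_div hp0).mpr hp2
  have h1 : ((1:ℝ≥0)/2 * A ^ p + 1/2 * B ^ p) ^ ((2:ℝ)/p)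
      ≤ 1/2 * (A ^ p) ^ ((2:ℝ)/p) + 1/2 * (B ^ p) ^ ((2:ℝ)/p) :=
    NNReal.rpow_arith_mean_le_arith_mean2_rpow _ _ _ _ (add_halves 1) h2p
  have hA2 : (A ^ p) ^ ((2:ℝ)/p) = A ^ (2:ℝ) := by
    rw [← NNReal.rpow_mul, mul_div_cancel₀ _ hp0.ne']
  have hB2 : (B ^ p) ^ ((2:ℝ)/p) = B ^ (2:ℝ) := by
    rw [← NNReal.rpow_mul, mul_div_cancel₀ _ hp0.ne']
  have h1' : (1:ℝ≥0)/2 * A ^ p + 1/2 * B ^ p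
      ≤ (1/2 * A ^ (2:ℝ) + 1/2 * B ^ (2:ℝ)) ^ (p/2) := by
    have := NNReal.rpow_le_rpow h1 (le_of_lt (by positivity : (0:ℝ) < p/2))
    rwa [← NNReal.rpow_mul, div_mul_div_comm, mul_comm (2:ℝ) p, div_self (by positivity),
      NNReal.rpow_one, hA2, hB2] at this
  have hhalf : (1:ℝ≥0)/2 * A ^ (2:ℝ) + 1/2 * B ^ (2:ℝ) = C ^ (2:ℝ) + D ^ (2:ℝ) := by
    have h := congrArg ((↑·) : ℝ≥0 → ℝ) hq
    apply NNReal.coe_injective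
    push_cast at h ⊢
    linarith
  have h2 : (C ^ (2:ℝ) + D ^ (2:ℝ)) ^ (p/2) ≤ C ^ p + D ^ p := by
    have h' := NNReal.rpow_le_rpow (NNReal.rpow_add_rpow_le C D hp0 hp2) hp0.le
    rwa [← NNReal.rpow_mul, ← NNReal.rpow_mul, one_div, one_div, inv_mul_cancel₀ hp0.ne',
      NNReal.rpow_one, inv_mul_eq_div] at h'
  have hfin : A ^ p + B ^ p = 2 * ((1:ℝ≥0)/2 * A ^ p + 1/2 * B ^ p) := by
    apply NNReal.coe_injective; push_cast; ring
  calc A ^ p + B ^ p = 2 * ((1:ℝ≥0)/2 * A ^ p + 1/2 * B ^ p) := hfin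
    _ ≤ 2 * (C ^ (2:ℝ) + D ^ (2:ℝ)) ^ (p/2) := by
        rw [← hhalf]; exact mul_le_mul_right h1' 2
    _ ≤ 2 * (C ^ p + D ^ p) := mul_le_mul_right h2 2
    _ = 2 * C ^ p + 2 * D ^ p := mul_add _ _ _

lemma ptwise {E : Type*} [NormedAddCommGroup E] [InnerProductSpace ℝ E]
    {p : ℝ} (hp1 : 1 ≤ p) (hp2 : p ≤ 2) (x y : E) :
    ‖x + y‖ ^ p + ‖x - y‖ ^ p ≤ 2 * ‖x‖ ^ p + 2 * ‖y‖ ^ p := by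
  have hq : ‖x + y‖₊ ^ (2:ℝ) + ‖x - y‖₊ ^ (2:ℝ) = 2 * ‖x‖₊ ^ (2:ℝ) + 2 * ‖y‖₊ ^ (2:ℝ) := by
    apply NNReal.coe_injective
    push_cast
    rw [Real.rpow_two, Real.rpow_two, Real.rpow_two, Real.rpow_two]
    have := parallelogram_law_with_norm ℝ x y
    linarith
  have h := aux_nnreal hp1 hp2 _ _ _ _ hq
  have h' := (NNReal.coe_le_coe).mpr h
  push_cast at h'
  convert h' using 2 <;> simp

lemma real_rpow_add_le {p : ℝ} (hp1 : 1 ≤ p) {a b : ℝ} (ha : 0 ≤ a) (hb : 0 ≤ b) :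
    (a + b) ^ p ≤ 2 ^ (p - 1) * (a ^ p + b ^ p) := by
  have h := NNReal.rpow_add_le_mul_rpow_add_rpow a.toNNReal b.toNNReal hp1
  have h' := (NNReal.coe_le_coe).mpr h
  push_cast at h'
  rwa [Real.coe_toNNReal _ ha, Real.coe_toNNReal _ hb] at h'

lemma self_le_one_add_rpow {p : ℝ} (hp1 : 1 ≤ p) {t : ℝ} (ht : 0 ≤ t) :
    t ≤ 1 + t ^ p := by
  rcases le_total t 1 with h | h
  · nlinarith [Real.rpow_nonneg ht p]
  · have h2 := Real.rpow_le_rpow_of_exponent_le h hp1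
    rw [Real.rpow_one] at h2
    linarith

section Aux
variable {E : Type*} [NormedAddCommGroup E] [NormedSpace ℝ E] [CompleteSpace E]
variable {Ω : Type*} [MeasurableSpace Ω] {μ : Measure Ω} [IsProbabilityMeasure μ]

lemma integrable_of_rpow_int {p : ℝ} (hp1 : 1 ≤ p) {Y : Ω → E}
    (hYm : AEStronglyMeasurable Y μ) (hYp : Integrable (fun ω => ‖Y ω‖ ^ p) μ) :
    Integrable Y μ := by
  refine Integrable.mono' ((integrable_const 1).add hYp) hYm ?_
  filter_upwards with ω
  exact self_le_one_add_rpow hp1 (norm_nonneg _)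

lemma norm_rpow_le_integral {p : ℝ} (hp1 : 1 ≤ p) {Y : Ω → E}
    (hYm : AEStronglyMeasurable Y μ)
    (hYp : Integrable (fun ω => ‖Y ω‖ ^ p) μ) (hmean : ∫ ω, Y ω ∂μ = 0) (v : E) :
    ‖v‖ ^ p ≤ ∫ ω, ‖v - Y ω‖ ^ p ∂μ := by
  have hp0 : (0:ℝ) < p := lt_of_lt_of_le zero_lt_one hp1
  have hYi : Integrable Y μ := integrable_of_rpow_int hp1 hYm hYp
  have hsub : Integrable (fun ω => v - Y ω) μ := (integrable_const v).sub hYi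
  have hfint : Integrable (fun ω => ‖v - Y ω‖) μ := hsub.norm
  have hgm : AEStronglyMeasurable (fun ω => ‖v - Y ω‖ ^ p) μ := by
    have hf := hfint.aestronglyMeasurable.aemeasurable
    exact (AEMeasurable.pow_const (β := ℝ) hf p |>.aestronglyMeasurable)
  have hgint : Integrable (fun ω => ‖v - Y ω‖ ^ p) μ := by
    refine Integrable.mono' (g := fun ω => 2 ^ (p-1) * (‖v‖ ^ p + ‖Y ω‖ ^ p))
      ((((integrable_const _).add hYp).const_mul _)) hgm ?_
    filter_upwards with ω
    rw [Real.norm_eq_abs, abs_of_nonneg (Real.rpow_nonneg (norm_nonneg _) p)]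
    calc ‖v - Y ω‖ ^ p ≤ (‖v‖ + ‖Y ω‖) ^ p :=
          Real.rpow_le_rpow (norm_nonneg _) (norm_sub_le _ _) hp0.le
      _ ≤ 2 ^ (p-1) * (‖v‖ ^ p + ‖Y ω‖ ^ p) :=
          real_rpow_add_le hp1 (norm_nonneg _) (norm_nonneg _)
  have hintsub : (∫ ω, (v - Y ω) ∂μ) = v := by
    rw [integral_sub (integrable_const v) hYi, hmean, integral_const]
    simp
  have hjensen : (∫ ω, ‖v - Y ω‖ ∂μ) ^ p ≤ ∫ ω, ‖v - Y ω‖ ^ p ∂μ := by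
    have h := ConvexOn.map_average_le (μ := μ) (f := fun ω => ‖v - Y ω‖)
      (convexOn_rpow hp1)
      (fun x hx => (Real.continuousAt_rpow_const x p (Or.inr hp0.le)).continuousWithinAt)
      isClosed_Ici (by filter_upwards with ω using Set.mem_Ici.mpr (norm_nonneg _))
      hfint hgint
    rwa [average_eq_integral, average_eq_integral] at h
  calc ‖v‖ ^ p = ‖∫ ω, (v - Y ω) ∂μ‖ ^ p := by rw [hintsub]
    _ ≤ (∫ ω, ‖v - Y ω‖ ∂μ) ^ p :=
        Real.rpow_le_rpow (norm_nonneg _) (norm_integral_le_integral_norm _) hp0.le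
    _ ≤ ∫ ω, ‖v - Y ω‖ ^ p ∂μ := hjensen

end Aux

section Core
variable {E : Type*} [NormedAddCommGroup E] [InnerProductSpace ℝ E] [CompleteSpace E]
  [MeasurableSpace E] [BorelSpace E] [SecondCountableTopology E]
variable {Ω : Type*} [MeasurableSpace Ω] {μ : Measure Ω} [IsProbabilityMeasure μ]

lemma integrable_norm_rpow_add {p : ℝ} (hp1 : 1 ≤ p) {X Y : Ω → E}
    (hXm : AEStronglyMeasurable X μ) (hYm : AEStronglyMeasurable Y μ)
    (hXp : Integrable (fun ω => ‖X ω‖ ^ p) μ) (hYp : Integrable (fun ω => ‖Y ω‖ ^ p) μ) :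
    Integrable (fun ω => ‖X ω + Y ω‖ ^ p) μ := by
  have hp0 : (0:ℝ) < p := lt_of_lt_of_le zero_lt_one hp1
  have hm : AEStronglyMeasurable (fun ω => ‖X ω + Y ω‖ ^ p) μ :=
    (AEMeasurable.pow_const (β := ℝ) (hXm.add hYm).norm.aemeasurable p).aestronglyMeasurable
  refine Integrable.mono' (g := fun ω => 2 ^ (p-1) * (‖X ω‖ ^ p + ‖Y ω‖ ^ p))
    ((hXp.add hYp).const_mul _) hm ?_
  filter_upwards with ω
  rw [Real.norm_eq_abs, abs_of_nonneg (Real.rpow_nonneg (norm_nonneg _) p)]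
  calc ‖X ω + Y ω‖ ^ p ≤ (‖X ω‖ + ‖Y ω‖) ^ p :=
        Real.rpow_le_rpow (norm_nonneg _) (norm_add_le _ _) hp0.le
    _ ≤ 2 ^ (p-1) * (‖X ω‖ ^ p + ‖Y ω‖ ^ p) :=
        real_rpow_add_le hp1 (norm_nonneg _) (norm_nonneg _)

lemma key_step {p : ℝ} (hp1 : 1 ≤ p) (hp2 : p ≤ 2) {X Y : Ω → E}
    (hXm : Measurable X) (hYm : Measurable Y) (hindep : IndepFun X Y μ)
    (hmean : ∫ ω, Y ω ∂μ = 0)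
    (hXp : Integrable (fun ω => ‖X ω‖ ^ p) μ)
    (hYp : Integrable (fun ω => ‖Y ω‖ ^ p) μ) :
    ∫ ω, ‖X ω + Y ω‖ ^ p ∂μ ≤ (∫ ω, ‖X ω‖ ^ p ∂μ) + 2 * ∫ ω, ‖Y ω‖ ^ p ∂μ := by
  have hp0 : (0:ℝ) < p := lt_of_lt_of_le zero_lt_one hp1
  have hint_add : Integrable (fun ω => ‖X ω + Y ω‖ ^ p) μ :=
    integrable_norm_rpow_add hp1 hXm.aestronglyMeasurable hYm.aestronglyMeasurable hXp hYp
  have hYp' : Integrable (fun ω => ‖(-Y) ω‖ ^ p) μ := by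
    simpa using hYp
  have hint_sub : Integrable (fun ω => ‖X ω - Y ω‖ ^ p) μ := by
    have := integrable_norm_rpow_add hp1 hXm.aestronglyMeasurable
      hYm.neg.aestronglyMeasurable hXp hYp'
    simpa [sub_eq_add_neg] using this
  -- Fubini part: ∫‖X‖^p ≤ ∫‖X - Y‖^p
  set ν₁ := μ.map X with hν₁
  set ν₂ := μ.map Y with hν₂
  haveI : IsProbabilityMeasure ν₁ := Measure.isProbabilityMeasure_map hXm.aemeasurable
  haveI : IsProbabilityMeasure ν₂ := Measure.isProbabilityMeasure_map hYm.aemeasurable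
  have hprod : μ.map (fun ω => (X ω, Y ω)) = ν₁.prod ν₂ :=
    (indepFun_iff_map_prod_eq_prod_map_map hXm.aemeasurable hYm.aemeasurable).mp hindep
  have hg_meas : Measurable (fun z : E × E => ‖z.1 - z.2‖ ^ p) :=
    Measurable.pow_const (measurable_fst.sub measurable_snd).norm p
  have hpair : AEMeasurable (fun ω => (X ω, Y ω)) μ := (hXm.prodMk hYm).aemeasurable
  have step1 : (∫ ω, ‖X ω - Y ω‖ ^ p ∂μ) = ∫ z, ‖z.1 - z.2‖ ^ p ∂(ν₁.prod ν₂) := by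
    rw [← hprod, integral_map hpair hg_meas.aestronglyMeasurable]
  have gint : Integrable (fun z : E × E => ‖z.1 - z.2‖ ^ p) (ν₁.prod ν₂) := by
    rw [← hprod]
    exact (integrable_map_measure hg_meas.aestronglyMeasurable hpair).mpr hint_sub
  have step2 : (∫ z, ‖z.1 - z.2‖ ^ p ∂(ν₁.prod ν₂))
      = ∫ x, (∫ y, ‖x - y‖ ^ p ∂ν₂) ∂ν₁ := integral_prod _ gint
  have hid_meas : AEStronglyMeasurable (fun y : E => y) ν₂ := aestronglyMeasurable_id
  have hmom2 : Integrable (fun y : E => ‖y‖ ^ p) ν₂ := by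
    refine (integrable_map_measure ?_ hYm.aemeasurable).mpr hYp
    exact (Measurable.pow_const measurable_norm p).aestronglyMeasurable
  have hmean2 : (∫ y, y ∂ν₂) = 0 := by
    have h := integral_map (μ := μ) (φ := Y) (f := fun y : E => y)
      hYm.aemeasurable aestronglyMeasurable_id
    rw [hν₂, h, hmean]
  have inner : ∀ x : E, ‖x‖ ^ p ≤ ∫ y, ‖x - y‖ ^ p ∂ν₂ := fun x =>
    norm_rpow_le_integral hp1 hid_meas hmom2 hmean2 x
  have hXint1 : Integrable (fun x : E => ‖x‖ ^ p) ν₁ := by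
    refine (integrable_map_measure ?_ hXm.aemeasurable).mpr hXp
    exact (Measurable.pow_const measurable_norm p).aestronglyMeasurable
  have houter : Integrable (fun x : E => ∫ y, ‖x - y‖ ^ p ∂ν₂) ν₁ :=
    gint.integral_prod_left
  have h2 : (∫ ω, ‖X ω‖ ^ p ∂μ) ≤ ∫ ω, ‖X ω - Y ω‖ ^ p ∂μ := by
    have hL : (∫ ω, ‖X ω‖ ^ p ∂μ) = ∫ x, ‖x‖ ^ p ∂ν₁ := by
      rw [hν₁, integral_map hXm.aemeasurable
        (Measurable.pow_const measurable_norm p).aestronglyMeasurable]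
    rw [hL, step1, step2]
    exact integral_mono hXint1 houter inner
  -- pointwise inequality integrated
  have hsum : (∫ ω, (‖X ω + Y ω‖ ^ p + ‖X ω - Y ω‖ ^ p) ∂μ)
      ≤ ∫ ω, (2 * ‖X ω‖ ^ p + 2 * ‖Y ω‖ ^ p) ∂μ :=
    integral_mono (hint_add.add hint_sub) ((hXp.const_mul 2).add (hYp.const_mul 2))
      (fun ω => ptwise hp1 hp2 (X ω) (Y ω))
  rw [integral_add hint_add hint_sub, integral_add (hXp.const_mul 2) (hYp.const_mul 2),
    integral_const_mul, integral_const_mul] at hsum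
  linarith

end Core

/-- vectorized von Bahr–Esseen inequality with weights: for independent
mean-zero random vectors `X₁, …, X_n` in `ℝ^d` with finite `p`-th moments, `p ∈ [1,2]`, and real
weights `a₁, …, a_n`, one has `E[‖∑ aᵢ Xᵢ‖^p] ≤ 2 ∑ |aᵢ|^p E[‖Xᵢ‖^p]`. -/
theorem von_bahr_esseen_vector
    {d n : ℕ} {Ω : Type*} [MeasurableSpace Ω] (μ : Measure Ω) [IsProbabilityMeasure μ]
    (p : ℝ) (hp1 : 1 ≤ p) (hp2 : p ≤ 2)
    (X : Fin n → Ω → EuclideanSpace ℝ (Fin d))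
    (hmeas : ∀ i, Measurable (X i))
    (hindep : iIndepFun X μ)
    (hmean : ∀ i, (∫ ω, X i ω ∂μ) = 0)
    (hmom : ∀ i, Integrable (fun ω => ‖X i ω‖ ^ p) μ)
    (a : Fin n → ℝ) :
    (∫ ω, ‖∑ i, a i • X i ω‖ ^ p ∂μ) ≤ 2 * ∑ i, |a i| ^ p * ∫ ω, ‖X i ω‖ ^ p ∂μ := by
  classical
  have hp0 : (0:ℝ) < p := lt_of_lt_of_le zero_lt_one hp1
  set Y : Fin n → Ω → EuclideanSpace ℝ (Fin d) := fun i ω => a i • X i ω with hY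
  have hYmeas : ∀ i, Measurable (Y i) := by
    intro i
    exact (measurable_const_smul (a i)).comp (hmeas i)
  have hYindep : iIndepFun Y μ := by
    exact hindep.comp (fun i (x : EuclideanSpace ℝ (Fin d)) => a i • x)
      (fun i => measurable_const_smul _)
  have hnorm : ∀ i ω, ‖Y i ω‖ ^ p = |a i| ^ p * ‖X i ω‖ ^ p := by
    intro i ω
    rw [hY]
    simp only
    rw [norm_smul, Real.norm_eq_abs,
      Real.mul_rpow (abs_nonneg _) (norm_nonneg _)]
  have hYmom : ∀ i, Integrable (fun ω => ‖Y i ω‖ ^ p) μ := by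
    intro i
    have : (fun ω => ‖Y i ω‖ ^ p) = fun ω => |a i| ^ p * ‖X i ω‖ ^ p :=
      funext fun ω => hnorm i ω
    rw [this]
    exact (hmom i).const_mul (|a i| ^ p)
  have hYmean : ∀ i, (∫ ω, Y i ω ∂μ) = 0 := by
    intro i
    have : (∫ ω, Y i ω ∂μ) = a i • ∫ ω, X i ω ∂μ := integral_smul _ _
    rw [this, hmean i, smul_zero]
  have main : ∀ s : Finset (Fin n),
      Integrable (fun ω => ‖∑ i ∈ s, Y i ω‖ ^ p) μ ∧
      (∫ ω, ‖∑ i ∈ s, Y i ω‖ ^ p ∂μ) ≤ 2 * ∑ i ∈ s, ∫ ω, ‖Y i ω‖ ^ p ∂μ := by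
    intro s
    induction s using Finset.induction_on with
    | empty =>
      constructor
      · simpa [Real.zero_rpow hp0.ne'] using integrable_const (0:ℝ)
      · simp [Real.zero_rpow hp0.ne']
    | @insert j s hj ih =>
      have hSmeas : Measurable (fun ω => ∑ i ∈ s, Y i ω) :=
        Finset.measurable_sum s (fun i _ => hYmeas i)
      have hindepS : IndepFun (fun ω => ∑ i ∈ s, Y i ω) (Y j) μ := by
        have h := hYindep.indepFun_finsetSum_of_notMem hYmeas hj
        have he : (∑ i ∈ s, Y i) = fun ω => ∑ i ∈ s, Y i ω := by
          funext ω; exact Finset.sum_apply ω s Y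
        rwa [he] at h
      have hkey := key_step hp1 hp2 hSmeas (hYmeas j) hindepS (hYmean j) ih.1 (hYmom j)
      have hrw : ∀ ω, ∑ i ∈ insert j s, Y i ω = (∑ i ∈ s, Y i ω) + Y j ω := by
        intro ω; rw [Finset.sum_insert hj, add_comm]
      constructor
      · have hint := integrable_norm_rpow_add hp1 hSmeas.aestronglyMeasurable
          (hYmeas j).aestronglyMeasurable ih.1 (hYmom j)
        refine hint.congr ?_
        filter_upwards with ω
        rw [hrw ω]
      · calc (∫ ω, ‖∑ i ∈ insert j s, Y i ω‖ ^ p ∂μ)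
            = ∫ ω, ‖(∑ i ∈ s, Y i ω) + Y j ω‖ ^ p ∂μ := by
              congr 1; funext ω; rw [hrw ω]
          _ ≤ (∫ ω, ‖∑ i ∈ s, Y i ω‖ ^ p ∂μ) + 2 * ∫ ω, ‖Y j ω‖ ^ p ∂μ := hkey
          _ ≤ 2 * (∑ i ∈ s, ∫ ω, ‖Y i ω‖ ^ p ∂μ) + 2 * ∫ ω, ‖Y j ω‖ ^ p ∂μ := by
              linarith [ih.2]
          _ = 2 * ∑ i ∈ insert j s, ∫ ω, ‖Y i ω‖ ^ p ∂μ := by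
              rw [Finset.sum_insert hj]; ring
  have hfinal := (main Finset.univ).2
  have heq : ∀ i, (∫ ω, ‖Y i ω‖ ^ p ∂μ) = |a i| ^ p * ∫ ω, ‖X i ω‖ ^ p ∂μ := by
    intro i
    rw [show (fun ω => ‖Y i ω‖ ^ p) = fun ω => |a i| ^ p * ‖X i ω‖ ^ p from
      funext fun ω => hnorm i ω, integral_const_mul]
  calc (∫ ω, ‖∑ i, a i • X i ω‖ ^ p ∂μ) = ∫ ω, ‖∑ i, Y i ω‖ ^ p ∂μ := rfl
    _ ≤ 2 * ∑ i, ∫ ω, ‖Y i ω‖ ^ p ∂μ := hfinal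
    _ = 2 * ∑ i, |a i| ^ p * ∫ ω, ‖X i ω‖ ^ p ∂μ := by
        congr 1; exact Finset.sum_congr rfl (fun i _ => heq i)
end

section
/- One-step descent lemma for a normalized step: let F : ℝ^d → ℝ be differentiable and L-smooth, let x ∈ ℝ^d, g ∈ ℝ^d with g ≠ 0, η > 0, and set x⁺ = x − η·g/‖g‖. Then F(x⁺) ≤ F(x) − η·‖∇F(x)‖ + 2η·‖g − ∇F(x)‖ + L·η²/2. -/
open InnerProductSpace

local notation "⟪" x ", " y "⟫" => @inner ℝ _ _ x y

lemma descent_aux {d : ℕ} (F : EuclideanSpace ℝ (Fin d) → ℝ)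
    (gradF : EuclideanSpace ℝ (Fin d) → EuclideanSpace ℝ (Fin d))
    (L : ℝ) (hL : 0 ≤ L)
    (hgrad : ∀ y, HasGradientAt F (gradF y) y)
    (hsmooth : ∀ y z, ‖gradF y - gradF z‖ ≤ L * ‖y - z‖)
    (x v : EuclideanSpace ℝ (Fin d)) :
    F (x + v) ≤ F x + ⟪gradF x, v⟫ + L * ‖v‖ ^ 2 / 2 := by
  set ψ : ℝ → ℝ := fun t => F (x + t • v) - t * ⟪gradF x, v⟫ - L * ‖v‖ ^ 2 * t ^ 2 / 2 with hψ
  have hline : ∀ t : ℝ, HasDerivAt (fun s : ℝ => x + s • v) v t := by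
    intro t
    simpa using ((hasDerivAt_id t).smul_const v).const_add x
  have hφ : ∀ t : ℝ, HasDerivAt (fun s : ℝ => F (x + s • v)) ⟪gradF (x + t • v), v⟫ t := by
    intro t
    have := (hgrad (x + t • v)).hasFDerivAt.comp_hasDerivAt t (hline t)
    exact this
  have hψ' : ∀ t : ℝ, HasDerivAt ψ
      (⟪gradF (x + t • v), v⟫ - ⟪gradF x, v⟫ - L * ‖v‖ ^ 2 * t) t := by
    intro t
    have h1 : HasDerivAt (fun s : ℝ => s * ⟪gradF x, v⟫) ⟪gradF x, v⟫ t := by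
      simpa using (hasDerivAt_id t).mul_const ⟪gradF x, v⟫
    have h2 : HasDerivAt (fun s : ℝ => L * ‖v‖ ^ 2 * s ^ 2 / 2) (L * ‖v‖ ^ 2 * t) t := by
      have := ((hasDerivAt_pow 2 t).const_mul (L * ‖v‖ ^ 2)).div_const 2
      exact this.congr_deriv (by ring)
    exact ((hφ t).sub h1).sub h2
  have key : ψ 1 ≤ ψ 0 := by
    have hanti : AntitoneOn ψ (Set.Icc 0 1) := by
      apply antitoneOn_of_deriv_nonpos (convex_Icc 0 1)
      · exact fun t _ => ((hψ' t).differentiableAt).continuousAt.continuousWithinAt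
      · intro t ht
        exact ((hψ' t).differentiableAt).differentiableWithinAt
      · intro t ht
        rw [interior_Icc] at ht
        rw [(hψ' t).deriv]
        have hti : ⟪gradF (x + t • v) - gradF x, v⟫ ≤ L * t * ‖v‖ ^ 2 := by
          calc ⟪gradF (x + t • v) - gradF x, v⟫ ≤ ‖gradF (x + t • v) - gradF x‖ * ‖v‖ :=
                real_inner_le_norm _ _
            _ ≤ L * ‖(x + t • v) - x‖ * ‖v‖ := by
                gcongr; exact hsmooth _ _
            _ = L * (|t| * ‖v‖) * ‖v‖ := by rw [add_sub_cancel_left, norm_smul]; simp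
            _ = L * |t| * ‖v‖ ^ 2 := by ring
            _ = L * t * ‖v‖ ^ 2 := by rw [abs_of_pos ht.1]
        have := inner_sub_left (𝕜 := ℝ) (gradF (x + t • v)) (gradF x) v
        rw [this] at hti
        linarith
    exact hanti (by norm_num) (by norm_num) (by norm_num)
  simp only [hψ] at key
  simp only [one_smul, zero_smul, add_zero, one_mul, one_pow, zero_pow, mul_zero, zero_mul,
    sub_zero] at key
  linarith [key]
/-- one-step descent lemma for a normalized step: if `F` is `L`-smooth and
`x⁺ = x − η·g/‖g‖` with `g ≠ 0` and `η > 0`, then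
`F(x⁺) ≤ F(x) − η‖∇F(x)‖ + 2η‖g − ∇F(x)‖ + Lη²/2`. -/
theorem normalized_step_descent
    {d : ℕ} (F : EuclideanSpace ℝ (Fin d) → ℝ)
    (gradF : EuclideanSpace ℝ (Fin d) → EuclideanSpace ℝ (Fin d))
    (L : ℝ) (hL : 0 ≤ L)
    (hgrad : ∀ y, HasGradientAt F (gradF y) y)
    (hsmooth : ∀ y z, ‖gradF y - gradF z‖ ≤ L * ‖y - z‖)
    (x g : EuclideanSpace ℝ (Fin d)) (hg : g ≠ 0) (η : ℝ) (hη : 0 < η)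
    (xplus : EuclideanSpace ℝ (Fin d)) (hxplus : xplus = x - η • (‖g‖⁻¹ • g)) :
    F xplus ≤ F x - η * ‖gradF x‖ + 2 * η * ‖g - gradF x‖ + L * η ^ 2 / 2 := by
  have hc : (0:ℝ) < ‖g‖ := norm_pos_iff.mpr hg
  set v : EuclideanSpace ℝ (Fin d) := -((η * ‖g‖⁻¹) • g) with hv
  have hx : xplus = x + v := by
    rw [hxplus, hv, smul_smul, sub_eq_add_neg]
  have hnv : ‖v‖ = η := by
    rw [hv, norm_neg, norm_smul, Real.norm_eq_abs, abs_of_pos (by positivity)]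
    field_simp
  have hkey := descent_aux F gradF L hL hgrad hsmooth x v
  rw [← hx, hnv] at hkey
  have hiv : ⟪gradF x, v⟫ = -(η * ‖g‖⁻¹) * ⟪gradF x, g⟫ := by
    rw [hv, inner_neg_right, real_inner_smul_right]; ring
  have h1 : ‖g‖ ^ 2 - ‖g - gradF x‖ * ‖g‖ ≤ ⟪gradF x, g⟫ := by
    have : ⟪g - gradF x, g⟫ ≤ ‖g - gradF x‖ * ‖g‖ := real_inner_le_norm _ _
    have hg2 : ⟪g, g⟫ = ‖g‖ ^ 2 := real_inner_self_eq_norm_sq g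
    rw [inner_sub_left] at this
    linarith
  have h2 : ‖gradF x‖ - ‖g - gradF x‖ ≤ ‖g‖ := by
    have h := norm_sub_le g (g - gradF x)
    rw [sub_sub_cancel] at h
    linarith
  have h3 : ⟪gradF x, v⟫ ≤ -η * ‖gradF x‖ + 2 * η * ‖g - gradF x‖ := by
    rw [hiv]
    have step : -(η * ‖g‖⁻¹) * ⟪gradF x, g⟫ ≤ -(η * ‖g‖⁻¹) * (‖g‖ ^ 2 - ‖g - gradF x‖ * ‖g‖) := by
      apply mul_le_mul_of_nonpos_left h1
      have : 0 < η * ‖g‖⁻¹ := by positivity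
      linarith
    have eq1 : -(η * ‖g‖⁻¹) * (‖g‖ ^ 2 - ‖g - gradF x‖ * ‖g‖)
        = -η * ‖g‖ + η * ‖g - gradF x‖ := by
      field_simp
      ring
    rw [eq1] at step
    nlinarith [norm_nonneg (g - gradF x)]
  linarith
end
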